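/- arXiv:1705.03686 — 6 statements merged into one kernel-verified Lean document; each statement's English description precedes it below -/
import Mathlib

section
/- Let G = (V, W, E) be a finite odd bipartite graph (for every nonempty X ⊆ W there is v ∈ V with |X ∩ N(v)| odd). Then there exists a subset V' ⊆ V with |V'| ≤ |W| such that the induced bipartite subgraph G[V' ∪ W] is still odd. -/
lemma odd_iff_cast_zmod2 (n : ℕ) : Odd n ↔ (n : ZMod 2) = 1 := by
  rw [Nat.odd_iff, show ((n : ZMod 2)) = ((n % 2 : ℕ) : ZMod 2) from (ZMod.natCast_mod n 2).symm]
  have h2 : n % 2 < 2 := Nat.mod_lt n two_pos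
  interval_cases h : n % 2 <;> simp

lemma zmod2_eq_one_of_ne_zero {x : ZMod 2} (h : x ≠ 0) : x = 1 := by
  revert h; revert x; decide

theorem exists_small_odd_subset {V W : Type*} [Fintype V] [Fintype W] [DecidableEq V]
    (E : V → W → Prop) [∀ v, DecidablePred (E v)]
    (hodd : ∀ X : Finset W, X.Nonempty → ∃ v : V, Odd (X.filter (fun w => E v w)).card) :
    ∃ V' : Finset V, V'.card ≤ Fintype.card W ∧
      ∀ X : Finset W, X.Nonempty → ∃ v ∈ V', Odd (X.filter (fun w => E v w)).card := by
  classical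
  set f : V → (W → ZMod 2) := fun v w => if E v w then 1 else 0 with hf
  have hsum : ∀ (v : V) (X : Finset W),
      (∑ w ∈ X, f v w) = ((X.filter (fun w => E v w)).card : ZMod 2) := by
    intro v X
    simp [hf, Finset.sum_boole]
  set P : Finset V → Prop := fun V' => ∀ X : Finset W, X.Nonempty →
    ∃ v ∈ V', Odd (X.filter (fun w => E v w)).card with hP
  have hQ : ∃ n, ∃ V' : Finset V, V'.card ≤ n ∧ P V' := by
    refine ⟨(Finset.univ : Finset V).card, Finset.univ, le_refl _, ?_⟩
    intro X hX
    obtain ⟨v, hv⟩ := hodd X hX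
    exact ⟨v, Finset.mem_univ v, hv⟩
  obtain ⟨V', hcard, hPV'⟩ := Nat.find_spec hQ
  refine ⟨V', ?_, hPV'⟩
  -- linear independence of f restricted to V'
  have hli : LinearIndependent (ZMod 2) (fun v : V' => f v) := by
    by_contra hdep
    rw [Fintype.not_linearIndependent_iff] at hdep
    obtain ⟨g, hg0, i0, hi0⟩ := hdep
    -- remove i0 and show P still holds
    have hP' : P (V'.erase (i0 : V)) := by
      intro X hX
      obtain ⟨v, hvV', hvodd⟩ := hPV' X hX
      by_cases hv0 : v = (i0 : V)
      · subst hv0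
        -- evaluate the dependence relation on X
        have hzero : ∑ i : V', g i * (∑ w ∈ X, f (i : V) w) = 0 := by
          calc ∑ i : V', g i * (∑ w ∈ X, f (i : V) w)
              = ∑ w ∈ X, ∑ i : V', g i * f (i : V) w := by
                rw [Finset.sum_comm]
                simp [Finset.mul_sum]
            _ = ∑ w ∈ X, (∑ i : V', g i • f (i : V)) w := by
                simp [Finset.sum_apply, smul_eq_mul]
            _ = 0 := by rw [hg0]; simp
        have hterm : g i0 * (∑ w ∈ X, f (i0 : V) w) = 1 := by
          rw [zmod2_eq_one_of_ne_zero hi0, one_mul, hsum, ← odd_iff_cast_zmod2]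
          exact hvodd
        rw [← Finset.add_sum_erase Finset.univ
          (fun i : V' => g i * (∑ w ∈ X, f (i : V) w)) (Finset.mem_univ i0)] at hzero
        rw [hterm] at hzero
        have hrest : ∑ i ∈ Finset.univ.erase i0, g i * (∑ w ∈ X, f (i : V) w) ≠ 0 := by
          intro h; rw [h] at hzero; exact absurd hzero (by decide)
        obtain ⟨i, hi_mem, hi_ne⟩ := Finset.exists_ne_zero_of_sum_ne_zero hrest
        have hsne : (∑ w ∈ X, f (i : V) w) ≠ 0 := fun h => hi_ne (by rw [h, mul_zero])
        have hodd_i : Odd (X.filter (fun w => E (i : V) w)).card := by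
          rw [odd_iff_cast_zmod2, ← hsum]
          exact zmod2_eq_one_of_ne_zero hsne
        refine ⟨(i : V), Finset.mem_erase.mpr ⟨?_, i.2⟩, hodd_i⟩
        exact fun h => (Finset.mem_erase.mp hi_mem).1 (Subtype.ext h)
      · exact ⟨v, Finset.mem_erase.mpr ⟨hv0, hvV'⟩, hvodd⟩
    -- contradiction with minimality
    have hpos : 0 < V'.card := Finset.card_pos.mpr ⟨(i0 : V), i0.2⟩
    have hfindpos : 0 < Nat.find hQ := lt_of_lt_of_le hpos hcard
    refine Nat.find_min hQ (show Nat.find hQ - 1 < Nat.find hQ by omega) ?_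
    refine ⟨V'.erase (i0 : V), ?_, hP'⟩
    rw [Finset.card_erase_of_mem i0.2]
    omega
  have hle := hli.fintype_card_le_finrank
  rwa [Fintype.card_coe, Module.finrank_pi] at hle
end

section
/- Let G be a 3-regular graph, σ a permutation of E(G), and B(G,σ) the bipartite graph with parts V_B = V(G)×{0,1} and W_B = E(G), where (v,0) is adjacent to e iff v ∈ e and (v,1) is adjacent to e iff v ∈ σ(e). Then B(G,σ) is even (i.e., not odd) if and only if there is a nonempty 2-regular edge set C ⊆ E(G) such that σ(C) is also 2-regular in G. -/
theorem bipartite_even_iff_two_regular {V : Type*} [Fintype V] [DecidableEq V]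
    (G : SimpleGraph V) [DecidableRel G.Adj] (hreg : G.IsRegularOfDegree 3)
    (σ : Equiv.Perm G.edgeSet) :
    -- B(G,σ) is even, i.e. not odd:
    (¬ ∀ X : Finset G.edgeSet, X.Nonempty →
        ∃ (v : V) (b : Bool),
          Odd (X.filter (fun e => v ∈ ((if b then σ e else e : G.edgeSet) : Sym2 V))).card) ↔
      -- iff there is a nonempty 2-regular edge set C with σ(C) also 2-regular:
      ∃ C : Finset G.edgeSet, C.Nonempty ∧
        (∀ v : V, (C.filter (fun e => v ∈ ((e : G.edgeSet) : Sym2 V))).card = 0 ∨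
                  (C.filter (fun e => v ∈ ((e : G.edgeSet) : Sym2 V))).card = 2) ∧
        (∀ v : V, ((C.image σ).filter (fun e => v ∈ ((e : G.edgeSet) : Sym2 V))).card = 0 ∨
                  ((C.image σ).filter (fun e => v ∈ ((e : G.edgeSet) : Sym2 V))).card = 2) := by
  classical
  -- any vertex is incident with at most 3 edges of any edge set
  have key : ∀ (X : Finset G.edgeSet) (v : V),
      (X.filter (fun e => v ∈ ((e : G.edgeSet) : Sym2 V))).card ≤ 3 := by
    intro X v
    have h1 : (X.filter (fun e => v ∈ ((e : G.edgeSet) : Sym2 V))).card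
        = ((X.filter (fun e => v ∈ ((e : G.edgeSet) : Sym2 V))).image
            (fun e => ((e : G.edgeSet) : Sym2 V))).card :=
      (Finset.card_image_of_injective _ Subtype.coe_injective).symm
    rw [h1]
    have h2 : ((X.filter (fun e => v ∈ ((e : G.edgeSet) : Sym2 V))).image
        (fun e => ((e : G.edgeSet) : Sym2 V))) ⊆ G.incidenceFinset v := by
      intro s hs
      simp only [Finset.mem_image, Finset.mem_filter] at hs
      obtain ⟨e, ⟨_, hv⟩, rfl⟩ := hs
      rw [SimpleGraph.mem_incidenceFinset]
      exact ⟨e.2, hv⟩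
    calc ((X.filter (fun e => v ∈ ((e : G.edgeSet) : Sym2 V))).image
            (fun e => ((e : G.edgeSet) : Sym2 V))).card
        ≤ (G.incidenceFinset v).card := Finset.card_le_card h2
      _ = 3 := by rw [SimpleGraph.card_incidenceFinset_eq_degree]; exact hreg v
  -- rewrite image-filter cards
  have himg : ∀ (X : Finset G.edgeSet) (v : V),
      ((X.image σ).filter (fun e => v ∈ ((e : G.edgeSet) : Sym2 V))).card
        = (X.filter (fun e => v ∈ ((σ e : G.edgeSet) : Sym2 V))).card := by
    intro X v
    rw [Finset.filter_image, Finset.card_image_of_injective _ σ.injective]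
  constructor
  · intro h
    push_neg at h
    obtain ⟨X, hXne, hX⟩ := h
    refine ⟨X, hXne, ?_, ?_⟩
    · intro v
      have he := hX v false
      simp only [if_neg, Bool.false_eq_true, not_false_iff, Nat.not_odd_iff_even] at he
      have hle := key X v
      obtain ⟨r, hr⟩ := he
      omega
    · intro v
      have he := hX v true
      simp only [if_pos, Nat.not_odd_iff_even] at he
      rw [himg X v]
      have hle : (X.filter (fun e => v ∈ ((σ e : G.edgeSet) : Sym2 V))).card ≤ 3 := by
        have := himg X v
        rw [← this]
        exact key (X.image σ) v
      obtain ⟨r, hr⟩ := he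
      omega
  · rintro ⟨C, hCne, h0, h1⟩ h
    obtain ⟨v, b, hodd⟩ := h C hCne
    cases b
    · simp only [Bool.false_eq_true, if_neg, not_false_iff] at hodd
      rcases h0 v with h | h <;> rw [h] at hodd <;> norm_num [Nat.odd_iff] at hodd
    · simp only [if_pos] at hodd
      rcases h1 v with h | h <;> rw [himg C v] at h <;> rw [h] at hodd <;> norm_num [Nat.odd_iff] at hodd
end

section
/- For n ≥ 4, the automorphism group of the graph G_n (the 2n-cycle with all main diagonals added, i.e., vertex set {1,…,2n}, edges {i, i+1 mod 2n} for 1 ≤ i ≤ 2n and {i, i+n} for 1 ≤ i ≤ n) is the dihedral group of order 4n, generated by the rotation (1,2,…,2n) and the reflection (1,2n)(2,2n−1)···(n,n+1). -/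
def cycleWithDiagonals (n : ℕ) : SimpleGraph (ZMod (2 * n)) :=
  SimpleGraph.fromRel (fun i j => j - i = 1 ∨ j - i = (n : ZMod (2 * n)))

namespace CWD
variable {n : ℕ}

lemma cast_ne_zero (hn : 4 ≤ n) {a : ℕ} (h0 : 0 < a) (h2 : a < 2*n) :
    (a : ZMod (2*n)) ≠ 0 := by
  haveI : NeZero (2*n) := ⟨by omega⟩
  intro h
  rw [ZMod.natCast_eq_zero_iff] at h
  have := Nat.le_of_dvd h0 h
  omega

lemma h1 (hn : 4 ≤ n) : (1 : ZMod (2*n)) ≠ 0 := by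
  exact_mod_cast cast_ne_zero hn (a := 1) (by omega) (by omega)

lemma h2 (hn : 4 ≤ n) : (2 : ZMod (2*n)) ≠ 0 := by
  exact_mod_cast cast_ne_zero hn (a := 2) (by omega) (by omega)

lemma h3 (hn : 4 ≤ n) : (3 : ZMod (2*n)) ≠ 0 := by
  exact_mod_cast cast_ne_zero hn (a := 3) (by omega) (by omega)

lemma h4 (hn : 4 ≤ n) : (4 : ZMod (2*n)) ≠ 0 := by
  exact_mod_cast cast_ne_zero hn (a := 4) (by omega) (by omega)

lemma hn0 (hn : 4 ≤ n) : (n : ZMod (2*n)) ≠ 0 := cast_ne_zero hn (by omega) (by omega)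

lemma hp1 (hn : 4 ≤ n) : (n : ZMod (2*n)) + 1 ≠ 0 := by
  have := cast_ne_zero hn (a := n+1) (by omega) (by omega); push_cast at this; exact this

lemma hp2 (hn : 4 ≤ n) : (n : ZMod (2*n)) + 2 ≠ 0 := by
  have := cast_ne_zero hn (a := n+2) (by omega) (by omega); push_cast at this; exact this

lemma hp3 (hn : 4 ≤ n) : (n : ZMod (2*n)) + 3 ≠ 0 := by
  have := cast_ne_zero hn (a := n+3) (by omega) (by omega); push_cast at this; exact this

lemma hm1 (hn : 4 ≤ n) : (n : ZMod (2*n)) - 1 ≠ 0 := by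
  have := cast_ne_zero hn (a := n-1) (by omega) (by omega)
  rw [Nat.cast_sub (by omega)] at this; push_cast at this; exact this

lemma hm2 (hn : 4 ≤ n) : (n : ZMod (2*n)) - 2 ≠ 0 := by
  have := cast_ne_zero hn (a := n-2) (by omega) (by omega)
  rw [Nat.cast_sub (by omega)] at this; push_cast at this; exact this

lemma hm3 (hn : 4 ≤ n) : (n : ZMod (2*n)) - 3 ≠ 0 := by
  have := cast_ne_zero hn (a := n-3) (by omega) (by omega)
  rw [Nat.cast_sub (by omega)] at this; push_cast at this; exact this

lemma hnn : (n : ZMod (2*n)) + n = 0 := by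
  have : ((2*n : ℕ) : ZMod (2*n)) = 0 := ZMod.natCast_self _
  push_cast at this; linear_combination this

lemma adj_iff (hn : 4 ≤ n) {i j : ZMod (2*n)} :
    (cycleWithDiagonals n).Adj i j ↔ (j - i = 1 ∨ j - i = -1 ∨ j - i = (n : ZMod (2*n))) := by
  rw [cycleWithDiagonals, SimpleGraph.fromRel_adj]
  constructor
  · rintro ⟨hne, (h | h) | (h | h)⟩
    · exact Or.inl h
    · exact Or.inr (Or.inr h)
    · exact Or.inr (Or.inl (by linear_combination -h))
    · exact Or.inr (Or.inr (by linear_combination -h - hnn (n := n)))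
  · rintro (h | h | h)
    · exact ⟨fun he => h1 hn (by rw [he] at h; linear_combination -h), Or.inl (Or.inl h)⟩
    · exact ⟨fun he => h1 hn (by rw [he] at h; linear_combination h), Or.inr (Or.inl (by linear_combination -h))⟩
    · exact ⟨fun he => hn0 hn (by rw [he] at h; linear_combination -h), Or.inl (Or.inr h)⟩


/-- Antipodality predicate, expressed purely via adjacency. -/
def Antip (n : ℕ) (i j : ZMod (2*n)) : Prop :=
  (cycleWithDiagonals n).Adj i j ∧
    ∀ x, (cycleWithDiagonals n).Adj i x → x ≠ j →
      ∃ y, (cycleWithDiagonals n).Adj j y ∧ y ≠ i ∧ (cycleWithDiagonals n).Adj x y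

lemma antip_iff (hn : 4 ≤ n) {i j : ZMod (2*n)} :
    Antip n i j ↔ j - i = (n : ZMod (2*n)) := by
  constructor
  · rintro ⟨hadj, hall⟩
    rw [adj_iff hn] at hadj
    rcases hadj with hd | hd | hd
    · -- j = i + 1 : contradiction
      exfalso
      obtain ⟨y, hyj, hyi, hxy⟩ := hall (i - 1)
        (by rw [adj_iff hn]; exact Or.inr (Or.inl (by ring)))
        (fun he => h2 hn (by linear_combination -he - hd))
      rw [adj_iff hn] at hyj hxy
      rcases hyj with a | a | a
      · have hy : y = i + 2 := by linear_combination a + hd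
        subst hy
        rcases hxy with b | b | b
        · exact h2 hn (by linear_combination b)
        · exact h4 hn (by linear_combination b)
        · exact hm3 hn (by linear_combination -b)
      · exact hyi (by linear_combination a + hd)
      · have hy : y = i + 1 + n := by linear_combination a + hd
        subst hy
        rcases hxy with b | b | b
        · exact hp1 hn (by linear_combination b)
        · exact hp3 hn (by linear_combination b)
        · exact h2 hn (by linear_combination b)
    · -- j = i - 1 : contradiction
      exfalso
      obtain ⟨y, hyj, hyi, hxy⟩ := hall (i + 1)
        (by rw [adj_iff hn]; exact Or.inl (by ring))
        (fun he => h2 hn (by linear_combination he + hd))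
      rw [adj_iff hn] at hyj hxy
      rcases hyj with a | a | a
      · exact hyi (by linear_combination a + hd)
      · have hy : y = i - 2 := by linear_combination a + hd
        subst hy
        rcases hxy with b | b | b
        · exact h4 hn (by linear_combination -b)
        · exact h2 hn (by linear_combination -b)
        · exact hp3 hn (by linear_combination -b)
      · have hy : y = i - 1 + n := by linear_combination a + hd
        subst hy
        rcases hxy with b | b | b
        · exact hm3 hn (by linear_combination b)
        · exact hm1 hn (by linear_combination b)
        · exact h2 hn (by linear_combination -b)
    · exact hd
  · intro hd
    refine ⟨by rw [adj_iff hn]; exact Or.inr (Or.inr hd), ?_⟩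
    intro x hx hxj
    rw [adj_iff hn] at hx
    rcases hx with hx | hx | hx
    · refine ⟨x + n, ?_, ?_, ?_⟩
      · rw [adj_iff hn]; exact Or.inl (by linear_combination hx - hd)
      · exact fun he => hp1 hn (by linear_combination he - hx)
      · rw [adj_iff hn]; exact Or.inr (Or.inr (by ring))
    · refine ⟨x + n, ?_, ?_, ?_⟩
      · rw [adj_iff hn]; exact Or.inr (Or.inl (by linear_combination hx - hd))
      · exact fun he => hm1 hn (by linear_combination he - hx)
      · rw [adj_iff hn]; exact Or.inr (Or.inr (by ring))
    · exact absurd (by linear_combination hx - hd) hxj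


lemma antip_map (hn : 4 ≤ n) {σ : Equiv.Perm (ZMod (2*n))}
    (hσ : ∀ i j, (cycleWithDiagonals n).Adj (σ i) (σ j) ↔ (cycleWithDiagonals n).Adj i j)
    {i j : ZMod (2*n)} (h : Antip n i j) : Antip n (σ i) (σ j) := by
  obtain ⟨ha, hall⟩ := h
  refine ⟨(hσ i j).2 ha, ?_⟩
  intro x hx hxj
  obtain ⟨y, h1, hy2, h3⟩ := hall (σ.symm x)
    (by rw [← hσ]; simpa using hx)
    (fun he => hxj (by rw [← he]; simp))
  refine ⟨σ y, (hσ j y).2 h1, fun he => hy2 (σ.injective he), ?_⟩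
  have := (hσ (σ.symm x) y).2 h3
  simpa using this

lemma inv_pres {σ : Equiv.Perm (ZMod (2*n))}
    (hσ : ∀ i j, (cycleWithDiagonals n).Adj (σ i) (σ j) ↔ (cycleWithDiagonals n).Adj i j) :
    ∀ i j, (cycleWithDiagonals n).Adj (σ.symm i) (σ.symm j) ↔ (cycleWithDiagonals n).Adj i j := by
  intro i j
  have := hσ (σ.symm i) (σ.symm j)
  simpa using this.symm

lemma cyc_map (hn : 4 ≤ n) {σ : Equiv.Perm (ZMod (2*n))}
    (hσ : ∀ i j, (cycleWithDiagonals n).Adj (σ i) (σ j) ↔ (cycleWithDiagonals n).Adj i j)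
    {i j : ZMod (2*n)} (h : j - i = 1 ∨ j - i = -1) :
    σ j - σ i = 1 ∨ σ j - σ i = -1 := by
  have hadj : (cycleWithDiagonals n).Adj (σ i) (σ j) := by
    rw [hσ, adj_iff hn]
    rcases h with h | h
    · exact Or.inl h
    · exact Or.inr (Or.inl h)
  rw [adj_iff hn] at hadj
  rcases hadj with h' | h' | h'
  · exact Or.inl h'
  · exact Or.inr h'
  · exfalso
    have hA : Antip n (σ i) (σ j) := (antip_iff hn).2 h'
    have hB : Antip n i j := by
      have := antip_map hn (inv_pres hσ) hA
      simpa using this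
    have := (antip_iff hn).1 hB
    rcases h with h | h
    · exact hm1 hn (by linear_combination h - this)
    · exact hp1 hn (by linear_combination h - this)

lemma classify (hn : 4 ≤ n) {σ : Equiv.Perm (ZMod (2*n))}
    (hσ : ∀ i j, (cycleWithDiagonals n).Adj (σ i) (σ j) ↔ (cycleWithDiagonals n).Adj i j) :
    ∃ ε c : ZMod (2*n), (ε = 1 ∨ ε = -1) ∧ ∀ x, σ x = ε * x + c := by
  set c := σ 0 with hc
  set ε := σ 1 - σ 0 with hε
  have hε1 : ε = 1 ∨ ε = -1 := cyc_map hn hσ (Or.inl (by ring))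
  refine ⟨ε, c, hε1, ?_⟩
  have key : ∀ m : ℕ, σ (m : ZMod (2*n)) = ε * m + c ∧
      σ ((m+1 : ℕ) : ZMod (2*n)) = ε * ((m+1:ℕ) : ZMod (2*n)) + c := by
    intro m
    induction m with
    | zero => exact ⟨by simp [hc], by push_cast; simp; linear_combination hε⟩
    | succ k ih =>
      obtain ⟨ih1, ih2⟩ := ih
      refine ⟨ih2, ?_⟩
      have hadj := cyc_map hn hσ (i := ((k+1:ℕ) : ZMod (2*n))) (j := ((k+2:ℕ) : ZMod (2*n)))
        (Or.inl (by push_cast; ring))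
      have hcases : σ ((k+2:ℕ) : ZMod (2*n)) = σ ((k+1:ℕ) : ZMod (2*n)) + ε ∨
          σ ((k+2:ℕ) : ZMod (2*n)) = σ ((k+1:ℕ) : ZMod (2*n)) - ε := by
        rcases hε1 with he | he <;> rcases hadj with ha | ha
        · exact Or.inl (by rw [he]; linear_combination ha)
        · exact Or.inr (by rw [he]; linear_combination ha)
        · exact Or.inr (by rw [he]; linear_combination ha)
        · exact Or.inl (by rw [he]; linear_combination ha)
      rcases hcases with hcase | hcase
      · rw [hcase, ih2]; push_cast; ring
      · exfalso
        have hk : σ ((k+2:ℕ) : ZMod (2*n)) = σ ((k:ℕ) : ZMod (2*n)) := by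
          rw [hcase, ih2, ih1]
          push_cast
          rcases hε1 with he | he <;> rw [he] <;> ring
        have := σ.injective hk
        apply h2 hn
        have h22 : ((k+2:ℕ) : ZMod (2*n)) = ((k:ℕ) : ZMod (2*n)) := this
        push_cast at h22
        linear_combination h22
  intro x
  haveI : NeZero (2*n) := ⟨by omega⟩
  have hx : ((x.val : ℕ) : ZMod (2*n)) = x := (ZMod.natCast_val x).trans (ZMod.cast_id _ _)
  rw [← hx]
  exact (key x.val).1


/-- The closure subgroup. -/
def K (n : ℕ) : Subgroup (Equiv.Perm (ZMod (2 * n))) :=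
  Subgroup.closure
    ({Equiv.addLeft 1, (Equiv.neg (ZMod (2 * n))).trans (Equiv.addLeft 1)} :
      Set (Equiv.Perm (ZMod (2 * n))))

lemma g1_mem : Equiv.addLeft (1 : ZMod (2*n)) ∈ K n :=
  Subgroup.subset_closure (Set.mem_insert _ _)

lemma g2_mem : (Equiv.neg (ZMod (2 * n))).trans (Equiv.addLeft 1) ∈ K n :=
  Subgroup.subset_closure (Set.mem_insert_of_mem _ rfl)

lemma addLeft_pow (m : ℕ) :
    (Equiv.addLeft (1 : ZMod (2*n))) ^ m = Equiv.addLeft (m : ZMod (2*n)) := by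
  induction m with
  | zero => ext x; simp
  | succ k ih =>
    ext x
    rw [pow_succ]
    simp only [Equiv.Perm.mul_apply, ih, Equiv.coe_addLeft]
    push_cast
    ring

lemma addLeft_mem (c : ZMod (2*n)) (hn : 4 ≤ n) : Equiv.addLeft c ∈ K n := by
  haveI : NeZero (2*n) := ⟨by omega⟩
  have hc : ((c.val : ℕ) : ZMod (2*n)) = c := (ZMod.natCast_val c).trans (ZMod.cast_id _ _)
  rw [← hc, ← addLeft_pow]
  exact pow_mem g1_mem _

lemma neg_mem (hn : 4 ≤ n) : Equiv.neg (ZMod (2*n)) ∈ K n := by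
  have he : Equiv.neg (ZMod (2*n)) =
      (Equiv.addLeft (1 : ZMod (2*n)))⁻¹ * ((Equiv.neg (ZMod (2 * n))).trans (Equiv.addLeft 1)) := by
    ext x
    simp [Equiv.Perm.mul_apply, Equiv.Perm.inv_def]
  rw [he]
  exact mul_mem (inv_mem g1_mem) g2_mem

/-- Any affine map `x ↦ ε x + c` with `ε = ±1` is in the closure. -/
lemma affine_mem (hn : 4 ≤ n) (σ : Equiv.Perm (ZMod (2*n))) (ε c : ZMod (2*n))
    (hε : ε = 1 ∨ ε = -1) (h : ∀ x, σ x = ε * x + c) : σ ∈ K n := by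
  rcases hε with he | he
  · have : σ = Equiv.addLeft c := by
      ext x; rw [h x, he]; simp [add_comm]
    rw [this]; exact addLeft_mem c hn
  · have : σ = Equiv.addLeft c * Equiv.neg (ZMod (2*n)) := by
      ext x; rw [h x, he]; simp [Equiv.Perm.mul_apply]; ring
    rw [this]; exact mul_mem (addLeft_mem c hn) (neg_mem hn)

lemma neg_cases (hn : 4 ≤ n) {d : ZMod (2*n)}
    (h : d = 1 ∨ d = -1 ∨ d = (n : ZMod (2*n))) :
    -d = 1 ∨ -d = -1 ∨ -d = (n : ZMod (2*n)) := by
  rcases h with h | h | h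
  · exact Or.inr (Or.inl (by rw [h]))
  · exact Or.inl (by rw [h]; ring)
  · exact Or.inr (Or.inr (by rw [h]; linear_combination -hnn (n := n)))

/-- The subgroup of adjacency-preserving permutations. -/
def presSub (n : ℕ) : Subgroup (Equiv.Perm (ZMod (2 * n))) where
  carrier := {σ | ∀ i j, (cycleWithDiagonals n).Adj (σ i) (σ j) ↔ (cycleWithDiagonals n).Adj i j}
  one_mem' := by intro i j; simp
  mul_mem' := by
    intro a b ha hb i j
    exact (ha (b i) (b j)).trans (hb i j)
  inv_mem' := by
    intro σ h i j
    have := h (σ⁻¹ i) (σ⁻¹ j)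
    simpa using this.symm

lemma g1_pres (hn : 4 ≤ n) : Equiv.addLeft (1 : ZMod (2*n)) ∈ presSub n := by
  intro i j
  have hd : (1 + j) - (1 + i) = j - i := by ring
  rw [adj_iff hn, adj_iff hn]
  simp only [Equiv.coe_addLeft]
  rw [hd]

lemma g2_pres (hn : 4 ≤ n) : (Equiv.neg (ZMod (2 * n))).trans (Equiv.addLeft 1) ∈ presSub n := by
  intro i j
  have hd : ((1 : ZMod (2*n)) + -j) - (1 + -i) = -(j - i) := by ring
  rw [adj_iff hn, adj_iff hn]
  simp only [Equiv.trans_apply, Equiv.neg_apply, Equiv.coe_addLeft]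
  rw [hd]
  constructor
  · intro h
    have := neg_cases hn (d := -(j-i)) h
    simpa using this
  · exact neg_cases hn

lemma closure_le_pres (hn : 4 ≤ n) : K n ≤ presSub n := by
  rw [K, Subgroup.closure_le]
  rintro σ (rfl | rfl)
  · exact g1_pres hn
  · exact g2_pres hn


/-- Affine permutation used for counting. -/
def F (n : ℕ) : Bool × ZMod (2*n) → Equiv.Perm (ZMod (2*n)) := fun p =>
  if p.1 then Equiv.addLeft p.2 else Equiv.addLeft p.2 * Equiv.neg (ZMod (2*n))

lemma F_mem (hn : 4 ≤ n) (p : Bool × ZMod (2*n)) : F n p ∈ K n := by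
  rcases p with ⟨b, c⟩
  cases b
  · exact mul_mem (addLeft_mem c hn) (neg_mem hn)
  · exact addLeft_mem c hn

lemma F_inj (hn : 4 ≤ n) : Function.Injective (F n) := by
  rintro ⟨b, c⟩ ⟨b', c'⟩ h
  have h0 := DFunLike.congr_fun h (0 : ZMod (2*n))
  have h1 := DFunLike.congr_fun h (1 : ZMod (2*n))
  cases b <;> cases b' <;>
    simp only [F, if_true, if_false, Bool.false_eq_true, Equiv.Perm.mul_apply,
      Equiv.coe_addLeft, Equiv.neg_apply, neg_zero, add_zero] at h0 h1
  · subst h0; rfl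
  · exfalso; subst h0; exact h2 hn (by linear_combination -h1)
  · exfalso; subst h0; exact h2 hn (by linear_combination h1)
  · subst h0; rfl

def fK (hn : 4 ≤ n) : Bool × ZMod (2*n) → (K n) := fun p => ⟨F n p, F_mem hn p⟩

lemma fK_bij (hn : 4 ≤ n) : Function.Bijective (fK hn) := by
  constructor
  · intro p q h
    exact F_inj hn (congrArg Subtype.val h)
  · rintro ⟨σ, hσK⟩
    have hpres := closure_le_pres hn hσK
    obtain ⟨ε, c, hε, h⟩ := classify hn hpres
    rcases hε with he | he
    · refine ⟨(true, c), ?_⟩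
      apply Subtype.ext
      ext x
      simp only [fK, F, if_true, Equiv.coe_addLeft]
      rw [h x, he]; ring
    · refine ⟨(false, c), ?_⟩
      apply Subtype.ext
      ext x
      simp only [fK, F, Bool.false_eq_true, if_false, Equiv.Perm.mul_apply,
        Equiv.coe_addLeft, Equiv.neg_apply]
      rw [h x, he]; ring

end CWD

theorem aut_cycleWithDiagonals (n : ℕ) (hn : 4 ≤ n) :
    (∀ σ : Equiv.Perm (ZMod (2 * n)),
      (∀ i j, (cycleWithDiagonals n).Adj (σ i) (σ j) ↔ (cycleWithDiagonals n).Adj i j) ↔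
        σ ∈ Subgroup.closure
          ({Equiv.addLeft 1, (Equiv.neg (ZMod (2 * n))).trans (Equiv.addLeft 1)} :
            Set (Equiv.Perm (ZMod (2 * n))))) ∧
    Nat.card (Subgroup.closure
        ({Equiv.addLeft 1, (Equiv.neg (ZMod (2 * n))).trans (Equiv.addLeft 1)} :
          Set (Equiv.Perm (ZMod (2 * n))))) = 4 * n := by
  constructor
  · intro σ
    constructor
    · intro hσ
      obtain ⟨ε, c, hε, h⟩ := CWD.classify hn hσ
      exact CWD.affine_mem hn σ ε c hε h
    · intro hmem
      exact CWD.closure_le_pres hn hmem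
  · haveI : NeZero (2*n) := ⟨by omega⟩
    have hcard : Nat.card (Bool × ZMod (2*n)) = Nat.card (CWD.K n) :=
      Nat.card_eq_of_bijective _ (CWD.fK_bij hn)
    have : Nat.card (CWD.K n) = 4 * n := by
      rw [← hcard, Nat.card_prod, Nat.card_zmod]
      simp [Nat.card_eq_fintype_card]
      ring
    exact this
end

section
/- For n ≥ 4, every 4-cycle in the graph G_n (the 2n-cycle with diagonals) contains at least two diagonal edges; consequently the set of diagonal edges {i, i+n} is invariant under every automorphism of G_n. -/
/-- An edge `{i,j}` of `cycleWithDiagonals n` is a diagonal if `j - i = n`. -/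
def IsDiagonal (n : ℕ) (i j : ZMod (2 * n)) : Prop := j - i = (n : ZMod (2 * n))

instance (n : ℕ) (i j : ZMod (2 * n)) : Decidable (IsDiagonal n i j) := by
  unfold IsDiagonal; infer_instance

lemma castne (n k : ℕ) (hk : 0 < k) (hk2 : k < 2*n) : (k : ZMod (2*n)) ≠ 0 := by
  haveI : NeZero (2*n) := ⟨by omega⟩
  rw [Ne, ZMod.natCast_eq_zero_iff]
  exact fun hdvd => absurd (Nat.le_of_dvd hk hdvd) (by omega)

lemma key0 {n : ℕ} (hn : 4 ≤ n) : (n : ZMod (2*n)) + n = 0 := by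
  have : ((2*n : ℕ) : ZMod (2*n)) = 0 := ZMod.natCast_self _
  push_cast at this
  linear_combination this

lemma key2 {n : ℕ} (hn : 4 ≤ n) : (2 : ZMod (2*n)) ≠ 0 := by
  have := castne n 2 (by omega) (by omega); push_cast at this; exact this

lemma key4 {n : ℕ} (hn : 4 ≤ n) : (4 : ZMod (2*n)) ≠ 0 := by
  have := castne n 4 (by omega) (by omega); push_cast at this; exact this

lemma keyP1 {n : ℕ} (hn : 4 ≤ n) : (n : ZMod (2*n)) + 1 ≠ 0 := by
  have := castne n (n+1) (by omega) (by omega); push_cast at this; exact this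

lemma keyP3 {n : ℕ} (hn : 4 ≤ n) : (n : ZMod (2*n)) + 3 ≠ 0 := by
  have := castne n (n+3) (by omega) (by omega); push_cast at this; exact this

lemma keyM1 {n : ℕ} (hn : 4 ≤ n) : (n : ZMod (2*n)) - 1 ≠ 0 := by
  have := castne n (n-1) (by omega) (by omega)
  rw [Nat.cast_sub (by omega)] at this; push_cast at this; exact this

lemma keyM3 {n : ℕ} (hn : 4 ≤ n) : (n : ZMod (2*n)) - 3 ≠ 0 := by
  have := castne n (n-3) (by omega) (by omega)
  rw [Nat.cast_sub (by omega)] at this; push_cast at this; exact this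

lemma adj_cases {n : ℕ} (hn : 4 ≤ n) {i j : ZMod (2*n)}
    (h : (cycleWithDiagonals n).Adj i j) :
    j - i = 1 ∨ j - i = -1 ∨ j - i = (n : ZMod (2*n)) := by
  have h2n := key0 hn
  simp only [cycleWithDiagonals, SimpleGraph.fromRel_adj] at h
  rcases h with ⟨hne, (h | h) | (h | h)⟩
  · exact Or.inl h
  · exact Or.inr (Or.inr h)
  · exact Or.inr (Or.inl (by linear_combination -h))
  · exact Or.inr (Or.inr (by linear_combination -h - h2n))

lemma adj_of {n : ℕ} (hn : 4 ≤ n) {i j : ZMod (2*n)}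
    (h : j - i = 1 ∨ j - i = -1 ∨ j - i = (n : ZMod (2*n))) :
    (cycleWithDiagonals n).Adj i j := by
  have h2n := key0 hn
  have f1 : (1 : ZMod (2*n)) ≠ 0 := by
    have := castne n 1 (by omega) (by omega); push_cast at this; exact this
  have fn : (n : ZMod (2*n)) ≠ 0 := by
    have := castne n n (by omega) (by omega); exact this
  simp only [cycleWithDiagonals, SimpleGraph.fromRel_adj]
  refine ⟨?_, ?_⟩
  · rintro rfl
    rcases h with h | h | h
    · exact f1 (by linear_combination -h)
    · exact f1 (by linear_combination h)
    · exact fn (by linear_combination -h)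
  · rcases h with h | h | h
    · exact Or.inl (Or.inl h)
    · exact Or.inr (Or.inl (by linear_combination -h))
    · exact Or.inl (Or.inr h)

lemma count_lemma {n : ℕ} (hn : 4 ≤ n) {a b c d : ZMod (2*n)}
    (hac : a ≠ c) (hbd : b ≠ d)
    (hd1 : b - a = 1 ∨ b - a = -1 ∨ b - a = (n : ZMod (2*n)))
    (hd2 : c - b = 1 ∨ c - b = -1 ∨ c - b = (n : ZMod (2*n)))
    (hd3 : d - c = 1 ∨ d - c = -1 ∨ d - c = (n : ZMod (2*n)))
    (hd4 : a - d = 1 ∨ a - d = -1 ∨ a - d = (n : ZMod (2*n))) :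
    2 ≤ (if IsDiagonal n a b then 1 else 0) + (if IsDiagonal n b c then 1 else 0)
      + (if IsDiagonal n c d then 1 else 0) + (if IsDiagonal n d a then (1 : ℕ) else 0) := by
  have h2n := key0 hn
  have f2 := key2 hn
  have f4 := key4 hn
  have fnP1 := keyP1 hn
  have fnM1 := keyM1 hn
  have fnP3 := keyP3 hn
  have fnM3 := keyM3 hn
  rcases hd1 with hd1 | hd1 | hd1 <;> rcases hd2 with hd2 | hd2 | hd2 <;>
    rcases hd3 with hd3 | hd3 | hd3 <;> rcases hd4 with hd4 | hd4 | hd4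
  · exact absurd (show (4 : ZMod (2*n)) = 0 by linear_combination -hd1 - hd2 - hd3 - hd4) f4
  · exact absurd (show (2 : ZMod (2*n)) = 0 by linear_combination -hd1 - hd2 - hd3 - hd4) f2
  · exact absurd (show (n : ZMod (2*n)) + 3 = 0 by linear_combination -hd1 - hd2 - hd3 - hd4) fnP3
  · exact absurd (show b = d by linear_combination -hd2 - hd3) hbd
  · exact absurd (show b = d by linear_combination -hd2 - hd3) hbd
  · exact absurd (show (n : ZMod (2*n)) + 1 = 0 by linear_combination -hd1 - hd2 - hd3 - hd4) fnP1
  · exact absurd (show (n : ZMod (2*n)) + 3 = 0 by linear_combination -hd1 - hd2 - hd3 - hd4) fnP3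
  · exact absurd (show (n : ZMod (2*n)) + 1 = 0 by linear_combination -hd1 - hd2 - hd3 - hd4) fnP1
  · rw [if_pos (show IsDiagonal n c d from hd3), if_pos (show IsDiagonal n d a from hd4)]; omega
  · exact absurd (show a = c by linear_combination -hd1 - hd2) hac
  · exact absurd (show a = c by linear_combination -hd1 - hd2) hac
  · exact absurd (show (n : ZMod (2*n)) + 1 = 0 by linear_combination -hd1 - hd2 - hd3 - hd4) fnP1
  · exact absurd (show a = c by linear_combination -hd1 - hd2) hac
  · exact absurd (show a = c by linear_combination -hd1 - hd2) hac
  · exact absurd (show (n : ZMod (2*n)) - 1 = 0 by linear_combination -hd1 - hd2 - hd3 - hd4) fnM1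
  · exact absurd (show (n : ZMod (2*n)) + 1 = 0 by linear_combination -hd1 - hd2 - hd3 - hd4) fnP1
  · exact absurd (show (n : ZMod (2*n)) - 1 = 0 by linear_combination -hd1 - hd2 - hd3 - hd4) fnM1
  · rw [if_pos (show IsDiagonal n c d from hd3), if_pos (show IsDiagonal n d a from hd4)]; omega
  · exact absurd (show (n : ZMod (2*n)) + 3 = 0 by linear_combination -hd1 - hd2 - hd3 - hd4) fnP3
  · exact absurd (show (n : ZMod (2*n)) + 1 = 0 by linear_combination -hd1 - hd2 - hd3 - hd4) fnP1
  · rw [if_pos (show IsDiagonal n b c from hd2), if_pos (show IsDiagonal n d a from hd4)]; omega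
  · exact absurd (show (n : ZMod (2*n)) + 1 = 0 by linear_combination -hd1 - hd2 - hd3 - hd4) fnP1
  · exact absurd (show (n : ZMod (2*n)) - 1 = 0 by linear_combination -hd1 - hd2 - hd3 - hd4) fnM1
  · rw [if_pos (show IsDiagonal n b c from hd2), if_pos (show IsDiagonal n d a from hd4)]; omega
  · rw [if_pos (show IsDiagonal n b c from hd2), if_pos (show IsDiagonal n c d from hd3)]; omega
  · rw [if_pos (show IsDiagonal n b c from hd2), if_pos (show IsDiagonal n c d from hd3)]; omega
  · rw [if_pos (show IsDiagonal n b c from hd2), if_pos (show IsDiagonal n c d from hd3)]; omega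
  · exact absurd (show a = c by linear_combination -hd1 - hd2) hac
  · exact absurd (show a = c by linear_combination -hd1 - hd2) hac
  · exact absurd (show (n : ZMod (2*n)) + 1 = 0 by linear_combination -hd1 - hd2 - hd3 - hd4) fnP1
  · exact absurd (show a = c by linear_combination -hd1 - hd2) hac
  · exact absurd (show a = c by linear_combination -hd1 - hd2) hac
  · exact absurd (show (n : ZMod (2*n)) - 1 = 0 by linear_combination -hd1 - hd2 - hd3 - hd4) fnM1
  · exact absurd (show (n : ZMod (2*n)) + 1 = 0 by linear_combination -hd1 - hd2 - hd3 - hd4) fnP1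
  · exact absurd (show (n : ZMod (2*n)) - 1 = 0 by linear_combination -hd1 - hd2 - hd3 - hd4) fnM1
  · rw [if_pos (show IsDiagonal n c d from hd3), if_pos (show IsDiagonal n d a from hd4)]; omega
  · exact absurd (show b = d by linear_combination -hd2 - hd3) hbd
  · exact absurd (show b = d by linear_combination -hd2 - hd3) hbd
  · exact absurd (show (n : ZMod (2*n)) - 1 = 0 by linear_combination -hd1 - hd2 - hd3 - hd4) fnM1
  · exact absurd (show (2 : ZMod (2*n)) = 0 by linear_combination hd1 + hd2 + hd3 + hd4) f2
  · exact absurd (show (4 : ZMod (2*n)) = 0 by linear_combination hd1 + hd2 + hd3 + hd4) f4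
  · exact absurd (show (n : ZMod (2*n)) - 3 = 0 by linear_combination -hd1 - hd2 - hd3 - hd4) fnM3
  · exact absurd (show (n : ZMod (2*n)) - 1 = 0 by linear_combination -hd1 - hd2 - hd3 - hd4) fnM1
  · exact absurd (show (n : ZMod (2*n)) - 3 = 0 by linear_combination -hd1 - hd2 - hd3 - hd4) fnM3
  · rw [if_pos (show IsDiagonal n c d from hd3), if_pos (show IsDiagonal n d a from hd4)]; omega
  · exact absurd (show (n : ZMod (2*n)) + 1 = 0 by linear_combination -hd1 - hd2 - hd3 - hd4) fnP1
  · exact absurd (show (n : ZMod (2*n)) - 1 = 0 by linear_combination -hd1 - hd2 - hd3 - hd4) fnM1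
  · rw [if_pos (show IsDiagonal n b c from hd2), if_pos (show IsDiagonal n d a from hd4)]; omega
  · exact absurd (show (n : ZMod (2*n)) - 1 = 0 by linear_combination -hd1 - hd2 - hd3 - hd4) fnM1
  · exact absurd (show (n : ZMod (2*n)) - 3 = 0 by linear_combination -hd1 - hd2 - hd3 - hd4) fnM3
  · rw [if_pos (show IsDiagonal n b c from hd2), if_pos (show IsDiagonal n d a from hd4)]; omega
  · rw [if_pos (show IsDiagonal n b c from hd2), if_pos (show IsDiagonal n c d from hd3)]; omega
  · rw [if_pos (show IsDiagonal n b c from hd2), if_pos (show IsDiagonal n c d from hd3)]; omega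
  · rw [if_pos (show IsDiagonal n b c from hd2), if_pos (show IsDiagonal n c d from hd3)]; omega
  · exact absurd (show (n : ZMod (2*n)) + 3 = 0 by linear_combination -hd1 - hd2 - hd3 - hd4) fnP3
  · exact absurd (show (n : ZMod (2*n)) + 1 = 0 by linear_combination -hd1 - hd2 - hd3 - hd4) fnP1
  · rw [if_pos (show IsDiagonal n a b from hd1), if_pos (show IsDiagonal n d a from hd4)]; omega
  · exact absurd (show (n : ZMod (2*n)) + 1 = 0 by linear_combination -hd1 - hd2 - hd3 - hd4) fnP1
  · exact absurd (show (n : ZMod (2*n)) - 1 = 0 by linear_combination -hd1 - hd2 - hd3 - hd4) fnM1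
  · rw [if_pos (show IsDiagonal n a b from hd1), if_pos (show IsDiagonal n d a from hd4)]; omega
  · rw [if_pos (show IsDiagonal n a b from hd1), if_pos (show IsDiagonal n c d from hd3)]; omega
  · rw [if_pos (show IsDiagonal n a b from hd1), if_pos (show IsDiagonal n c d from hd3)]; omega
  · rw [if_pos (show IsDiagonal n a b from hd1), if_pos (show IsDiagonal n c d from hd3)]; omega
  · exact absurd (show (n : ZMod (2*n)) + 1 = 0 by linear_combination -hd1 - hd2 - hd3 - hd4) fnP1
  · exact absurd (show (n : ZMod (2*n)) - 1 = 0 by linear_combination -hd1 - hd2 - hd3 - hd4) fnM1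
  · rw [if_pos (show IsDiagonal n a b from hd1), if_pos (show IsDiagonal n d a from hd4)]; omega
  · exact absurd (show (n : ZMod (2*n)) - 1 = 0 by linear_combination -hd1 - hd2 - hd3 - hd4) fnM1
  · exact absurd (show (n : ZMod (2*n)) - 3 = 0 by linear_combination -hd1 - hd2 - hd3 - hd4) fnM3
  · rw [if_pos (show IsDiagonal n a b from hd1), if_pos (show IsDiagonal n d a from hd4)]; omega
  · rw [if_pos (show IsDiagonal n a b from hd1), if_pos (show IsDiagonal n c d from hd3)]; omega
  · rw [if_pos (show IsDiagonal n a b from hd1), if_pos (show IsDiagonal n c d from hd3)]; omega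
  · rw [if_pos (show IsDiagonal n a b from hd1), if_pos (show IsDiagonal n c d from hd3)]; omega
  · rw [if_pos (show IsDiagonal n a b from hd1), if_pos (show IsDiagonal n b c from hd2)]; omega
  · rw [if_pos (show IsDiagonal n a b from hd1), if_pos (show IsDiagonal n b c from hd2)]; omega
  · rw [if_pos (show IsDiagonal n a b from hd1), if_pos (show IsDiagonal n b c from hd2)]; omega
  · rw [if_pos (show IsDiagonal n a b from hd1), if_pos (show IsDiagonal n b c from hd2)]; omega
  · rw [if_pos (show IsDiagonal n a b from hd1), if_pos (show IsDiagonal n b c from hd2)]; omega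
  · rw [if_pos (show IsDiagonal n a b from hd1), if_pos (show IsDiagonal n b c from hd2)]; omega
  · rw [if_pos (show IsDiagonal n a b from hd1), if_pos (show IsDiagonal n b c from hd2)]; omega
  · rw [if_pos (show IsDiagonal n a b from hd1), if_pos (show IsDiagonal n b c from hd2)]; omega
  · rw [if_pos (show IsDiagonal n a b from hd1), if_pos (show IsDiagonal n b c from hd2)]; omega

lemma unique_lemma {n : ℕ} (hn : 4 ≤ n) {i j x y : ZMod (2*n)}
    (hd1 : j - i = 1 ∨ j - i = -1)
    (hxi : x ≠ i) (hyj : y ≠ j)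
    (hd2 : x - j = 1 ∨ x - j = -1 ∨ x - j = (n : ZMod (2*n)))
    (hd3 : y - x = 1 ∨ y - x = -1 ∨ y - x = (n : ZMod (2*n)))
    (hd4 : i - y = 1 ∨ i - y = -1 ∨ i - y = (n : ZMod (2*n))) :
    x = j + (n : ZMod (2*n)) := by
  have h2n := key0 hn
  have f2 := key2 hn
  have f4 := key4 hn
  have fnP1 := keyP1 hn
  have fnM1 := keyM1 hn
  have fnP3 := keyP3 hn
  have fnM3 := keyM3 hn
  rcases hd1 with hd1 | hd1 <;> rcases hd2 with hd2 | hd2 | hd2 <;>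
    rcases hd3 with hd3 | hd3 | hd3 <;> rcases hd4 with hd4 | hd4 | hd4
  · exact absurd (show (4 : ZMod (2*n)) = 0 by linear_combination -hd1 - hd2 - hd3 - hd4) f4
  · exact absurd (show (2 : ZMod (2*n)) = 0 by linear_combination -hd1 - hd2 - hd3 - hd4) f2
  · exact absurd (show (n : ZMod (2*n)) + 3 = 0 by linear_combination -hd1 - hd2 - hd3 - hd4) fnP3
  · exact absurd (show y = j by linear_combination hd2 + hd3) hyj
  · exact absurd (show y = j by linear_combination hd2 + hd3) hyj
  · exact absurd (show y = j by linear_combination hd2 + hd3) hyj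
  · exact absurd (show (n : ZMod (2*n)) + 3 = 0 by linear_combination -hd1 - hd2 - hd3 - hd4) fnP3
  · exact absurd (show (n : ZMod (2*n)) + 1 = 0 by linear_combination -hd1 - hd2 - hd3 - hd4) fnP1
  · exact absurd (show (2 : ZMod (2*n)) = 0 by linear_combination -hd1 - hd2 - hd3 - hd4 - h2n) f2
  · exact absurd (show x = i by linear_combination hd1 + hd2) hxi
  · exact absurd (show x = i by linear_combination hd1 + hd2) hxi
  · exact absurd (show x = i by linear_combination hd1 + hd2) hxi
  · exact absurd (show x = i by linear_combination hd1 + hd2) hxi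
  · exact absurd (show x = i by linear_combination hd1 + hd2) hxi
  · exact absurd (show x = i by linear_combination hd1 + hd2) hxi
  · exact absurd (show x = i by linear_combination hd1 + hd2) hxi
  · exact absurd (show x = i by linear_combination hd1 + hd2) hxi
  · exact absurd (show x = i by linear_combination hd1 + hd2) hxi
  · linear_combination hd2
  · linear_combination hd2
  · linear_combination hd2
  · linear_combination hd2
  · linear_combination hd2
  · linear_combination hd2
  · linear_combination hd2
  · linear_combination hd2
  · linear_combination hd2
  · exact absurd (show x = i by linear_combination hd1 + hd2) hxi
  · exact absurd (show x = i by linear_combination hd1 + hd2) hxi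
  · exact absurd (show x = i by linear_combination hd1 + hd2) hxi
  · exact absurd (show x = i by linear_combination hd1 + hd2) hxi
  · exact absurd (show x = i by linear_combination hd1 + hd2) hxi
  · exact absurd (show x = i by linear_combination hd1 + hd2) hxi
  · exact absurd (show x = i by linear_combination hd1 + hd2) hxi
  · exact absurd (show x = i by linear_combination hd1 + hd2) hxi
  · exact absurd (show x = i by linear_combination hd1 + hd2) hxi
  · exact absurd (show y = j by linear_combination hd2 + hd3) hyj
  · exact absurd (show y = j by linear_combination hd2 + hd3) hyj
  · exact absurd (show y = j by linear_combination hd2 + hd3) hyj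
  · exact absurd (show (2 : ZMod (2*n)) = 0 by linear_combination hd1 + hd2 + hd3 + hd4) f2
  · exact absurd (show (4 : ZMod (2*n)) = 0 by linear_combination hd1 + hd2 + hd3 + hd4) f4
  · exact absurd (show (n : ZMod (2*n)) - 3 = 0 by linear_combination -hd1 - hd2 - hd3 - hd4) fnM3
  · exact absurd (show (n : ZMod (2*n)) - 1 = 0 by linear_combination -hd1 - hd2 - hd3 - hd4) fnM1
  · exact absurd (show (n : ZMod (2*n)) - 3 = 0 by linear_combination -hd1 - hd2 - hd3 - hd4) fnM3
  · exact absurd (show (2 : ZMod (2*n)) = 0 by linear_combination hd1 + hd2 + hd3 + hd4 + h2n) f2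
  · linear_combination hd2
  · linear_combination hd2
  · linear_combination hd2
  · linear_combination hd2
  · linear_combination hd2
  · linear_combination hd2
  · linear_combination hd2
  · linear_combination hd2
  · linear_combination hd2

/-- `Cyc n i j x y`: `i j x y` is a 4-cycle through the edge `(i,j)`. -/
def Cyc (n : ℕ) (i j x y : ZMod (2*n)) : Prop :=
  (cycleWithDiagonals n).Adj j x ∧ (cycleWithDiagonals n).Adj x y ∧
  (cycleWithDiagonals n).Adj y i ∧ x ≠ i ∧ y ≠ j

/-- `Q n i j`: the edge `(i,j)` lies on two distinct 4-cycles. -/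
def Q (n : ℕ) (i j : ZMod (2*n)) : Prop :=
  ∃ x y x' y', Cyc n i j x y ∧ Cyc n i j x' y' ∧ x ≠ x'

lemma diag_iff_Q {n : ℕ} (hn : 4 ≤ n) {i j : ZMod (2*n)}
    (h : (cycleWithDiagonals n).Adj i j) : IsDiagonal n i j ↔ Q n i j := by
  have h2n := key0 hn
  have f2 := key2 hn
  have fnP1 := keyP1 hn
  have fnM1 := keyM1 hn
  constructor
  · intro hd
    have hd : j - i = (n : ZMod (2*n)) := hd
    refine ⟨j + 1, i + 1, j - 1, i - 1, ⟨?_, ?_, ?_, ?_, ?_⟩, ⟨?_, ?_, ?_, ?_, ?_⟩, ?_⟩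
    · exact adj_of hn (Or.inl (by ring))
    · exact adj_of hn (Or.inr (Or.inr (by linear_combination -hd - h2n)))
    · exact adj_of hn (Or.inr (Or.inl (by ring)))
    · intro hh; exact fnP1 (by linear_combination hh - hd)
    · intro hh; exact fnM1 (by linear_combination -hd - hh)
    · exact adj_of hn (Or.inr (Or.inl (by ring)))
    · exact adj_of hn (Or.inr (Or.inr (by linear_combination -hd - h2n)))
    · exact adj_of hn (Or.inl (by ring))
    · intro hh; exact fnM1 (by linear_combination hh - hd)
    · intro hh; exact fnP1 (by linear_combination -hd - hh)
    · intro hh; exact f2 (by linear_combination hh)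
  · rintro ⟨x, y, x', y', ⟨ha1, ha2, ha3, hxi, hyj⟩, ⟨hb1, hb2, hb3, hxi', hyj'⟩, hxx⟩
    by_contra hnd
    have hij : j - i = 1 ∨ j - i = -1 := by
      rcases adj_cases hn h with hh | hh | hh
      · exact Or.inl hh
      · exact Or.inr hh
      · exact absurd hh hnd
    have e1 : x = j + (n : ZMod (2*n)) :=
      unique_lemma hn hij hxi hyj (adj_cases hn ha1) (adj_cases hn ha2) (adj_cases hn ha3)
    have e2 : x' = j + (n : ZMod (2*n)) :=
      unique_lemma hn hij hxi' hyj' (adj_cases hn hb1) (adj_cases hn hb2) (adj_cases hn hb3)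
    exact hxx (e1.trans e2.symm)

lemma Q_map {n : ℕ} (σ : Equiv.Perm (ZMod (2*n)))
    (hσ : ∀ i j, (cycleWithDiagonals n).Adj (σ i) (σ j) ↔ (cycleWithDiagonals n).Adj i j)
    {i j : ZMod (2*n)} (h : Q n i j) : Q n (σ i) (σ j) := by
  obtain ⟨x, y, x', y', ⟨ha1, ha2, ha3, hxi, hyj⟩, ⟨hb1, hb2, hb3, hxi', hyj'⟩, hxx⟩ := h
  exact ⟨σ x, σ y, σ x', σ y',
    ⟨(hσ j x).mpr ha1, (hσ x y).mpr ha2, (hσ y i).mpr ha3,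
      fun hh => hxi (σ.injective hh), fun hh => hyj (σ.injective hh)⟩,
    ⟨(hσ j x').mpr hb1, (hσ x' y').mpr hb2, (hσ y' i).mpr hb3,
      fun hh => hxi' (σ.injective hh), fun hh => hyj' (σ.injective hh)⟩,
    fun hh => hxx (σ.injective hh)⟩

theorem four_cycles_have_two_diagonals (n : ℕ) (hn : 4 ≤ n) :
    (∀ a b c d : ZMod (2 * n),
      a ≠ b → a ≠ c → a ≠ d → b ≠ c → b ≠ d → c ≠ d →
      (cycleWithDiagonals n).Adj a b → (cycleWithDiagonals n).Adj b c →
      (cycleWithDiagonals n).Adj c d → (cycleWithDiagonals n).Adj d a →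
      2 ≤ (if IsDiagonal n a b then 1 else 0) + (if IsDiagonal n b c then 1 else 0)
        + (if IsDiagonal n c d then 1 else 0) + (if IsDiagonal n d a then (1 : ℕ) else 0)) ∧
    (∀ σ : Equiv.Perm (ZMod (2 * n)),
      (∀ i j, (cycleWithDiagonals n).Adj (σ i) (σ j) ↔ (cycleWithDiagonals n).Adj i j) →
      ∀ i j, (cycleWithDiagonals n).Adj i j → (IsDiagonal n i j ↔ IsDiagonal n (σ i) (σ j))) := by
  constructor
  · intro a b c d _ hac _ _ hbd _ hAB hBC hCD hDA
    exact count_lemma hn hac hbd (adj_cases hn hAB) (adj_cases hn hBC)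
      (adj_cases hn hCD) (adj_cases hn hDA)
  · intro σ hσ i j hij
    have hσ' : ∀ a b, (cycleWithDiagonals n).Adj (σ.symm a) (σ.symm b) ↔
        (cycleWithDiagonals n).Adj a b := by
      intro a b
      have := hσ (σ.symm a) (σ.symm b)
      simpa using this.symm
    have hadj' : (cycleWithDiagonals n).Adj (σ i) (σ j) := (hσ i j).mpr hij
    rw [diag_iff_Q hn hij, diag_iff_Q hn hadj']
    constructor
    · exact Q_map σ hσ
    · intro hq
      have := Q_map σ.symm hσ' hq
      simpa using this
end

section
/- Let Γ = Γ₁ × Γ₂ × Γ₃ be a finite group and Δ ≤ Γ a subdirect product (each coordinate projection is surjective) that is 2-factor injective (each projection onto two of the factors is injective) and 2-factor surjective (each projection onto two factors is surjective). Then Γ₁, Γ₂, Γ₃ are pairwise isomorphic abelian groups, and Δ is isomorphic to the subgroup {(a,b,c) ∈ Γ₁³ : abc = 1}, which in turn is isomorphic to Γ₁² as an abstract group. -/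
theorem two_factor_inj_surj_subdirect_product_classification
    {Γ₁ Γ₂ Γ₃ : Type*} [Group Γ₁] [Group Γ₂] [Group Γ₃]
    [Finite Γ₁] [Finite Γ₂] [Finite Γ₃]
    (Δ : Subgroup (Γ₁ × Γ₂ × Γ₃))
    -- subdirect product: the coordinate projections are surjective
    (h1 : Function.Surjective fun d : Δ => (d : Γ₁ × Γ₂ × Γ₃).1)
    (h2 : Function.Surjective fun d : Δ => (d : Γ₁ × Γ₂ × Γ₃).2.1)
    (h3 : Function.Surjective fun d : Δ => (d : Γ₁ × Γ₂ × Γ₃).2.2)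
    -- 2-factor injective
    (hi12 : Function.Injective fun d : Δ => ((d : Γ₁ × Γ₂ × Γ₃).1, (d : Γ₁ × Γ₂ × Γ₃).2.1))
    (hi13 : Function.Injective fun d : Δ => ((d : Γ₁ × Γ₂ × Γ₃).1, (d : Γ₁ × Γ₂ × Γ₃).2.2))
    (hi23 : Function.Injective fun d : Δ => ((d : Γ₁ × Γ₂ × Γ₃).2.1, (d : Γ₁ × Γ₂ × Γ₃).2.2))
    -- 2-factor surjective
    (hs12 : Function.Surjective fun d : Δ => ((d : Γ₁ × Γ₂ × Γ₃).1, (d : Γ₁ × Γ₂ × Γ₃).2.1))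
    (hs13 : Function.Surjective fun d : Δ => ((d : Γ₁ × Γ₂ × Γ₃).1, (d : Γ₁ × Γ₂ × Γ₃).2.2))
    (hs23 : Function.Surjective fun d : Δ => ((d : Γ₁ × Γ₂ × Γ₃).2.1, (d : Γ₁ × Γ₂ × Γ₃).2.2)) :
    -- Γ₁, Γ₂, Γ₃ are isomorphic abelian groups
    (∀ a b : Γ₁, a * b = b * a) ∧ (∀ a b : Γ₂, a * b = b * a) ∧ (∀ a b : Γ₃, a * b = b * a) ∧
    Nonempty (Γ₁ ≃* Γ₂) ∧ Nonempty (Γ₁ ≃* Γ₃) ∧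
    -- Δ is isomorphic (as a group) to {(a,b,c) ∈ Γ₁³ : a·b·c = 1}
    (∃ e : Δ ≃ {p : Γ₁ × Γ₁ × Γ₁ // p.1 * p.2.1 * p.2.2 = 1},
      ∀ x y : Δ, (e (x * y) : Γ₁ × Γ₁ × Γ₁) = (e x : Γ₁ × Γ₁ × Γ₁) * (e y : Γ₁ × Γ₁ × Γ₁)) ∧
    -- which in turn is isomorphic to Γ₁² as an abstract group
    Nonempty (Δ ≃* Γ₁ × Γ₁) := by
  classical
  -- uniqueness lemmas
  have huniq12 : ∀ x y : Γ₁ × Γ₂ × Γ₃, x ∈ Δ → y ∈ Δ → x.1 = y.1 → x.2.1 = y.2.1 → x = y := by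
    intro x y hx hy e1 e2
    have := hi12 (a₁ := ⟨x, hx⟩) (a₂ := ⟨y, hy⟩) (by simp [e1, e2])
    exact congrArg Subtype.val this
  have huniq13 : ∀ x y : Γ₁ × Γ₂ × Γ₃, x ∈ Δ → y ∈ Δ → x.1 = y.1 → x.2.2 = y.2.2 → x = y := by
    intro x y hx hy e1 e2
    have := hi13 (a₁ := ⟨x, hx⟩) (a₂ := ⟨y, hy⟩) (by simp [e1, e2])
    exact congrArg Subtype.val this
  have huniq23 : ∀ x y : Γ₁ × Γ₂ × Γ₃, x ∈ Δ → y ∈ Δ → x.2.1 = y.2.1 → x.2.2 = y.2.2 → x = y := by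
    intro x y hx hy e1 e2
    have := hi23 (a₁ := ⟨x, hx⟩) (a₂ := ⟨y, hy⟩) (by simp [e1, e2])
    exact congrArg Subtype.val this
  -- define φ : Γ₁ → Γ₃ and ψ : Γ₂ → Γ₃
  have hφex : ∀ a : Γ₁, ∃ c : Γ₃, (a, 1, c) ∈ Δ := by
    intro a
    obtain ⟨d, hd⟩ := hs12 (a, 1)
    refine ⟨(d : Γ₁ × Γ₂ × Γ₃).2.2, ?_⟩
    have e1 : (d : Γ₁ × Γ₂ × Γ₃).1 = a := congrArg Prod.fst hd
    have e2 : (d : Γ₁ × Γ₂ × Γ₃).2.1 = 1 := congrArg Prod.snd hd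
    have : (d : Γ₁ × Γ₂ × Γ₃) = (a, 1, (d : Γ₁ × Γ₂ × Γ₃).2.2) := by
      ext <;> simp [e1, e2]
    rw [← this]; exact d.2
  have hψex : ∀ b : Γ₂, ∃ c : Γ₃, (1, b, c) ∈ Δ := by
    intro b
    obtain ⟨d, hd⟩ := hs12 (1, b)
    refine ⟨(d : Γ₁ × Γ₂ × Γ₃).2.2, ?_⟩
    have e1 : (d : Γ₁ × Γ₂ × Γ₃).1 = 1 := congrArg Prod.fst hd
    have e2 : (d : Γ₁ × Γ₂ × Γ₃).2.1 = b := congrArg Prod.snd hd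
    have : (d : Γ₁ × Γ₂ × Γ₃) = (1, b, (d : Γ₁ × Γ₂ × Γ₃).2.2) := by
      ext <;> simp [e1, e2]
    rw [← this]; exact d.2
  set φ : Γ₁ → Γ₃ := fun a => (hφex a).choose with hφdef
  set ψ : Γ₂ → Γ₃ := fun b => (hψex b).choose with hψdef
  have hφ : ∀ a : Γ₁, (a, 1, φ a) ∈ Δ := fun a => (hφex a).choose_spec
  have hψ : ∀ b : Γ₂, (1, b, ψ b) ∈ Δ := fun b => (hψex b).choose_spec
  -- φ, ψ are homomorphisms
  have hφmul : ∀ a a' : Γ₁, φ (a * a') = φ a * φ a' := by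
    intro a a'
    have hm : ((a, 1, φ a) : Γ₁ × Γ₂ × Γ₃) * (a', 1, φ a') ∈ Δ := Δ.mul_mem (hφ a) (hφ a')
    have := huniq12 _ _ (hφ (a * a')) hm rfl (by simp)
    exact congrArg (fun x : Γ₁ × Γ₂ × Γ₃ => x.2.2) this
  have hψmul : ∀ b b' : Γ₂, ψ (b * b') = ψ b * ψ b' := by
    intro b b'
    have hm : ((1, b, ψ b) : Γ₁ × Γ₂ × Γ₃) * (1, b', ψ b') ∈ Δ := Δ.mul_mem (hψ b) (hψ b')
    have := huniq12 _ _ (hψ (b * b')) hm (by simp) rfl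
    exact congrArg (fun x : Γ₁ × Γ₂ × Γ₃ => x.2.2) this
  have hφ1 : φ 1 = 1 := by
    have := huniq12 _ _ (hφ 1) Δ.one_mem rfl rfl
    exact congrArg (fun x : Γ₁ × Γ₂ × Γ₃ => x.2.2) this
  have hψ1 : ψ 1 = 1 := by
    have := huniq12 _ _ (hψ 1) Δ.one_mem rfl rfl
    exact congrArg (fun x : Γ₁ × Γ₂ × Γ₃ => x.2.2) this
  -- third coordinate formula and commutation
  have hthird : ∀ x : Γ₁ × Γ₂ × Γ₃, x ∈ Δ → x.2.2 = φ x.1 * ψ x.2.1 := by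
    intro x hx
    have hm : ((x.1, 1, φ x.1) : Γ₁ × Γ₂ × Γ₃) * (1, x.2.1, ψ x.2.1) ∈ Δ :=
      Δ.mul_mem (hφ x.1) (hψ x.2.1)
    have := huniq12 x _ hx hm (by simp) (by simp)
    exact congrArg (fun y : Γ₁ × Γ₂ × Γ₃ => y.2.2) this
  have hcomm : ∀ (a : Γ₁) (b : Γ₂), φ a * ψ b = ψ b * φ a := by
    intro a b
    have hm : ((1, b, ψ b) : Γ₁ × Γ₂ × Γ₃) * (a, 1, φ a) ∈ Δ := Δ.mul_mem (hψ b) (hφ a)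
    have hm' : ((a, 1, φ a) : Γ₁ × Γ₂ × Γ₃) * (1, b, ψ b) ∈ Δ := Δ.mul_mem (hφ a) (hψ b)
    have := huniq12 _ _ hm' hm (by simp) (by simp)
    exact congrArg (fun y : Γ₁ × Γ₂ × Γ₃ => y.2.2) this
  -- φ, ψ bijective
  have hφinj : Function.Injective φ := by
    intro a a' h
    have := huniq23 _ _ (hφ a) (hφ a') rfl h
    exact congrArg (fun y : Γ₁ × Γ₂ × Γ₃ => y.1) this
  have hψinj : Function.Injective ψ := by
    intro b b' h
    have := huniq13 _ _ (hψ b) (hψ b') rfl h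
    exact congrArg (fun y : Γ₁ × Γ₂ × Γ₃ => y.2.1) this
  have hφsurj : Function.Surjective φ := by
    intro c
    obtain ⟨d, hd⟩ := hs23 (1, c)
    have e1 : (d : Γ₁ × Γ₂ × Γ₃).2.1 = (1 : Γ₂) := congrArg Prod.fst hd
    have e2 : (d : Γ₁ × Γ₂ × Γ₃).2.2 = c := congrArg Prod.snd hd
    refine ⟨(d : Γ₁ × Γ₂ × Γ₃).1, ?_⟩
    have := hthird _ d.2
    rw [e1, e2, hψ1, mul_one] at this
    exact this.symm
  have hψsurj : Function.Surjective ψ := by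
    intro c
    obtain ⟨d, hd⟩ := hs13 (1, c)
    have e1 : (d : Γ₁ × Γ₂ × Γ₃).1 = (1 : Γ₁) := congrArg Prod.fst hd
    have e2 : (d : Γ₁ × Γ₂ × Γ₃).2.2 = c := congrArg Prod.snd hd
    refine ⟨(d : Γ₁ × Γ₂ × Γ₃).2.1, ?_⟩
    have := hthird _ d.2
    rw [e1, e2, hφ1, one_mul] at this
    exact this.symm
  -- commutativity
  have comm3 : ∀ a b : Γ₃, a * b = b * a := by
    intro a b
    obtain ⟨x, rfl⟩ := hφsurj a
    obtain ⟨y, rfl⟩ := hψsurj b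
    exact hcomm x y
  have comm1 : ∀ a b : Γ₁, a * b = b * a := by
    intro a b
    apply hφinj
    rw [hφmul, hφmul, comm3]
  have comm2 : ∀ a b : Γ₂, a * b = b * a := by
    intro a b
    apply hψinj
    rw [hψmul, hψmul, comm3]
  -- the mul equivs
  let φ' : Γ₁ →* Γ₃ := MonoidHom.mk' φ hφmul
  let ψ' : Γ₂ →* Γ₃ := MonoidHom.mk' ψ hψmul
  let eφ : Γ₁ ≃* Γ₃ := MulEquiv.ofBijective φ' ⟨hφinj, hφsurj⟩
  let eψ : Γ₂ ≃* Γ₃ := MulEquiv.ofBijective ψ' ⟨hψinj, hψsurj⟩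
  have heφ : ∀ a : Γ₁, eφ a = φ a := fun a => rfl
  have heψ : ∀ b : Γ₂, eψ b = ψ b := fun b => rfl
  have heφs : ∀ a : Γ₁, eφ.symm (φ a) = a := by
    intro a; rw [← heφ]; exact eφ.symm_apply_apply a
  have heψs : ∀ b : Γ₂, eψ.symm (ψ b) = b := by
    intro b; rw [← heψ]; exact eψ.symm_apply_apply b
  refine ⟨comm1, comm2, comm3, ⟨eφ.trans eψ.symm⟩, ⟨eφ⟩, ?_, ?_⟩
  · -- the explicit equiv with the product-one subtype
    have hmem : ∀ d : Δ, (d : Γ₁ × Γ₂ × Γ₃).1 * eφ.symm (ψ (d : Γ₁ × Γ₂ × Γ₃).2.1) *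
        (eφ.symm (d : Γ₁ × Γ₂ × Γ₃).2.2)⁻¹ = 1 := by
      intro d
      have h3 := hthird _ d.2
      rw [h3, map_mul, heφs]
      exact mul_inv_cancel _
    let F : Δ → {p : Γ₁ × Γ₁ × Γ₁ // p.1 * p.2.1 * p.2.2 = 1} := fun d =>
      ⟨((d : Γ₁ × Γ₂ × Γ₃).1, eφ.symm (ψ (d : Γ₁ × Γ₂ × Γ₃).2.1),
        (eφ.symm (d : Γ₁ × Γ₂ × Γ₃).2.2)⁻¹), hmem d⟩
    have hFinj : Function.Injective F := by
      intro x y h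
      simp only [F, Subtype.mk.injEq, Prod.mk.injEq] at h
      have e2' : (x : Γ₁ × Γ₂ × Γ₃).2.1 = (y : Γ₁ × Γ₂ × Γ₃).2.1 :=
        hψinj (eφ.symm.injective h.2.1)
      exact hi12 (by simp [h.1, e2'])
    have hFsurj : Function.Surjective F := by
      rintro ⟨⟨x, y, z⟩, hp⟩
      obtain ⟨d, hd⟩ := hs12 (x, eψ.symm (eφ y))
      have e1 : (d : Γ₁ × Γ₂ × Γ₃).1 = x := congrArg Prod.fst hd
      have e2 : (d : Γ₁ × Γ₂ × Γ₃).2.1 = eψ.symm (eφ y) := congrArg Prod.snd hd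
      refine ⟨d, ?_⟩
      have hψe : ψ ((d : Γ₁ × Γ₂ × Γ₃).2.1) = eφ y := by
        rw [e2, ← heψ]; exact eψ.apply_symm_apply _
      have h3 := hthird _ d.2
      have hz : (eφ.symm (d : Γ₁ × Γ₂ × Γ₃).2.2)⁻¹ = z := by
        rw [h3, map_mul, heφs, hψe, MulEquiv.symm_apply_apply, e1]
        exact inv_eq_of_mul_eq_one_right hp
      apply Subtype.ext
      simp only [F]
      refine Prod.ext e1 (Prod.ext ?_ hz)
      simp only
      rw [hψe, MulEquiv.symm_apply_apply]
    have hFmul : ∀ x y : Δ, ((F (x * y) : {p : Γ₁ × Γ₁ × Γ₁ // p.1 * p.2.1 * p.2.2 = 1}) :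
        Γ₁ × Γ₁ × Γ₁) = (F x : Γ₁ × Γ₁ × Γ₁) * (F y : Γ₁ × Γ₁ × Γ₁) := by
      intro x y
      refine Prod.ext rfl (Prod.ext ?_ ?_)
      · show eφ.symm (ψ ((x : Γ₁ × Γ₂ × Γ₃).2.1 * (y : Γ₁ × Γ₂ × Γ₃).2.1)) = _
        rw [hψmul, map_mul]; rfl
      · show (eφ.symm ((x : Γ₁ × Γ₂ × Γ₃).2.2 * (y : Γ₁ × Γ₂ × Γ₃).2.2))⁻¹ = _
        rw [map_mul, mul_inv_rev, comm1]; rfl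
    exact ⟨Equiv.ofBijective F ⟨hFinj, hFsurj⟩, hFmul⟩
  · -- Δ ≃* Γ₁ × Γ₁
    let π : Δ →* Γ₁ × Γ₂ := MonoidHom.mk'
      (fun d => ((d : Γ₁ × Γ₂ × Γ₃).1, (d : Γ₁ × Γ₂ × Γ₃).2.1)) (fun x y => rfl)
    have hπbij : Function.Bijective π := ⟨hi12, hs12⟩
    exact ⟨(MulEquiv.ofBijective π hπbij).trans
      (MulEquiv.prodCongr (MulEquiv.refl Γ₁) (eψ.trans eφ.symm))⟩
end

section
/- Let G = (V, W, E) be a bipartite graph satisfying: (1) every v ∈ V has degree 3; (2) G is odd; (3) G is rigid (its only automorphism is the identity); (4) no two distinct w₁, w₂ ∈ W have equal second neighborhoods N²_G(w₁) = N²_G(w₂). Then the multipede graph R(G), obtained by replacing each w ∈ W with a pair {a(w), b(w)} and each v ∈ V with a CFI gadget X₃ attached to the pairs of its three neighbors, is rigid. -/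
/-- The bipartite graph on `V ⊕ W` associated with a bipartite adjacency
relation `E : V → W → Prop`. -/
def bipartiteGraph {V W : Type*} (E : V → W → Prop) : SimpleGraph (V ⊕ W) :=
  SimpleGraph.fromRel (fun x y =>
    match x, y with
    | Sum.inl v, Sum.inr w => E v w
    | _, _ => False)

/-- The second neighborhood of a vertex: all vertices `u ≠ x` having a common
neighbor with `x`. -/
def secondNbhd {α : Type*} (G : SimpleGraph α) (x : α) : Set α :=
  {u | u ≠ x ∧ ∃ y, G.Adj x y ∧ G.Adj y u}

/-- The multipede graph `R(G)`.  Every `w ∈ W` is replaced by the pair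
`(w, false) = a(w)`, `(w, true) = b(w)`; every `v ∈ V` is replaced by a CFI gadget
whose inner vertices `m_i(v)` are indexed by even-weight vectors `i ∈ {0,1}³`, with
`m_i(v)` adjacent to `a(w_j)` if `i_j = 0` and to `b(w_j)` if `i_j = 1`, where
`w_1, w_2, w_3 = nb v 0, nb v 1, nb v 2` are the three neighbors of `v`. -/
def multipede {V W : Type*} (nb : V → Fin 3 → W) :
    SimpleGraph ((V × {i : Fin 3 → Bool // Even (Finset.univ.filter (fun j => i j = true)).card})
      ⊕ (W × Bool)) :=
  SimpleGraph.fromRel (fun x y =>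
    match x, y with
    | Sum.inl (v, i), Sum.inr (w, b) => ∃ j : Fin 3, nb v j = w ∧ i.val j = b
    | _, _ => False)

/- ## Auxiliary material -/

section Aux

/-- Abbreviation for the even-weight vectors indexing inner gadget vertices. -/
abbrev MPEVec := {i : Fin 3 → Bool // Even (Finset.univ.filter (fun j => i j = true)).card}

variable {V W : Type*} (nb : V → Fin 3 → W) (E : V → W → Prop)

lemma mp_adj_inl_inr (v : V) (i : MPEVec) (w : W) (b : Bool) :
    (multipede nb).Adj (Sum.inl (v,i)) (Sum.inr (w,b)) ↔ ∃ j, nb v j = w ∧ i.val j = b := by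
  simp [multipede, SimpleGraph.fromRel_adj]

lemma mp_adj_inr_inl (v : V) (i : MPEVec) (w : W) (b : Bool) :
    (multipede nb).Adj (Sum.inr (w,b)) (Sum.inl (v,i)) ↔ ∃ j, nb v j = w ∧ i.val j = b := by
  rw [SimpleGraph.adj_comm]; exact mp_adj_inl_inr nb v i w b

lemma mp_adj_inl_inl (p q : V × MPEVec) : ¬ (multipede nb).Adj (Sum.inl p) (Sum.inl q) := by
  obtain ⟨v,i⟩ := p; obtain ⟨v',i'⟩ := q
  simp [multipede, SimpleGraph.fromRel_adj]

lemma mp_adj_inr_inr (p q : W × Bool) : ¬ (multipede nb).Adj (Sum.inr p) (Sum.inr q) := by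
  obtain ⟨v,i⟩ := p; obtain ⟨v',i'⟩ := q
  simp [multipede, SimpleGraph.fromRel_adj]

lemma bp_adj_inl_inr (v : V) (w : W) :
    (bipartiteGraph E).Adj (Sum.inl v) (Sum.inr w) ↔ E v w := by
  simp [bipartiteGraph, SimpleGraph.fromRel_adj]

lemma bp_adj_inl_inl (p q : V) : ¬ (bipartiteGraph E).Adj (Sum.inl p) (Sum.inl q) := by
  simp [bipartiteGraph, SimpleGraph.fromRel_adj]

lemma bp_adj_inr_inr (p q : W) : ¬ (bipartiteGraph E).Adj (Sum.inr p) (Sum.inr q) := by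
  simp [bipartiteGraph, SimpleGraph.fromRel_adj]

lemma even_card_of_invol {α : Type*} [DecidableEq α] (f : α → α) (s : Finset α)
    (h1 : ∀ a ∈ s, f a ∈ s) (h2 : ∀ a ∈ s, f (f a) = a) (h3 : ∀ a ∈ s, f a ≠ a) :
    Even s.card := by
  induction s using Finset.strongInduction with
  | _ s ih =>
    rcases s.eq_empty_or_nonempty with rfl | ⟨a, ha⟩
    · simp
    · have hfa : f a ∈ s := h1 a ha
      have hne : f a ≠ a := h3 a ha
      set t := (s.erase a).erase (f a) with ht
      have hsub : t ⊂ s := by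
        refine Finset.ssubset_iff_of_subset ?_ |>.mpr ⟨a, ha, by simp [ht]⟩
        exact (Finset.erase_subset _ _).trans (Finset.erase_subset _ _)
      have hmem : ∀ x ∈ t, x ∈ s := fun x hx => hsub.1 hx
      have h1t : ∀ x ∈ t, f x ∈ t := by
        intro x hx
        have hxs := hmem x hx
        have hxa : x ≠ a := by simp [ht] at hx; tauto
        have hxfa : x ≠ f a := by simp [ht] at hx; tauto
        refine Finset.mem_erase.mpr ⟨?_, Finset.mem_erase.mpr ⟨?_, h1 x hxs⟩⟩
        · intro hfx; exact hxa (by rw [← h2 x hxs, hfx, h2 a ha])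
        · intro hfx; exact hxfa (by rw [← h2 x hxs, hfx])
      have ht2 : ∀ x ∈ t, f (f x) = x := fun x hx => h2 x (hmem x hx)
      have ht3 : ∀ x ∈ t, f x ≠ x := fun x hx => h3 x (hmem x hx)
      have hcard : s.card = t.card + 2 := by
        rw [ht, Finset.card_erase_of_mem (by exact Finset.mem_erase.mpr ⟨hne, hfa⟩),
          Finset.card_erase_of_mem ha]
        have : 2 ≤ s.card := by
          have := Finset.one_lt_card.mpr ⟨a, ha, f a, hfa, hne.symm⟩; omega
        omega
      rw [hcard]
      obtain ⟨k, hk⟩ := ih t hsub h1t ht2 ht3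
      exact ⟨k+1, by omega⟩

/-- the weight of a boolean vector -/
def mpwt (i : Fin 3 → Bool) : ℕ := (Finset.univ.filter (fun j => i j = true)).card

/-- flip all coordinates except `j` -/
def mpflip (j : Fin 3) (f : Fin 3 → Bool) : Fin 3 → Bool :=
  fun k => if k = j then f k else !(f k)

lemma mpflip_even (j : Fin 3) (f : Fin 3 → Bool) (h : Even (mpwt f)) :
    Even (mpwt (mpflip j f)) := by revert h; revert f j; decide

lemma mpflip_invol (j : Fin 3) (f : Fin 3 → Bool) :
    mpflip j (mpflip j f) = f := by revert f j; decide

lemma mpflip_ne (j : Fin 3) (f : Fin 3 → Bool) : mpflip j f ≠ f := by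
    revert f j; decide

lemma mpflip_apply (j : Fin 3) (f : Fin 3 → Bool) : mpflip j f j = f j := by
  simp [mpflip]

lemma mp_exists_even_vec (j j' : Fin 3) (hjj : j ≠ j') (b c : Bool) :
    ∃ i : Fin 3 → Bool, Even (mpwt i) ∧ i j = b ∧ i j' = c := by
  revert hjj; revert j j' b c; decide

lemma mp_bool_trichotomy (a b c : Bool) (h : a ≠ b) : c = a ∨ c = b := by
  revert h; revert a b c; decide

lemma mp_xor_parity (i x : Fin 3 → Bool) (hi : Even (mpwt i)) :
    (Even (mpwt (fun j => xor (i j) (x j))) ↔ Even (mpwt x)) := by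
  revert hi; revert i x; decide

end Aux

theorem multipede_rigid {V W : Type*} [Fintype V] [Fintype W] [DecidableEq V] [DecidableEq W]
    (E : V → W → Prop) [∀ v, DecidablePred (E v)]
    (nb : V → Fin 3 → W)
    -- (1) every `v ∈ V` has degree 3, with neighbors `nb v 0, nb v 1, nb v 2`
    (hnb : ∀ v, Function.Injective (nb v))
    (hnbE : ∀ v w, E v w ↔ ∃ j, nb v j = w)
    -- (2) G is odd
    (hodd : ∀ X : Finset W, X.Nonempty → ∃ v : V, Odd (X.filter (fun w => E v w)).card)
    -- (3) G is rigid
    (hrigid : ∀ σ : Equiv.Perm (V ⊕ W),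
      (∀ x y, (bipartiteGraph E).Adj (σ x) (σ y) ↔ (bipartiteGraph E).Adj x y) → σ = 1)
    -- (4) no two distinct vertices of `W` have equal second neighborhoods
    (htwin : ∀ w₁ w₂ : W,
      secondNbhd (bipartiteGraph E) (Sum.inr w₁) = secondNbhd (bipartiteGraph E) (Sum.inr w₂) →
      w₁ = w₂) :
    -- then the multipede graph `R(G)` is rigid
    ∀ σ : Equiv.Perm
        ((V × {i : Fin 3 → Bool // Even (Finset.univ.filter (fun j => i j = true)).card})
          ⊕ (W × Bool)),
      (∀ x y, (multipede nb).Adj (σ x) (σ y) ↔ (multipede nb).Adj x y) → σ = 1 := by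
  classical
  intro σ h
  -- the twin-freeness of V (two vertices of V with the same neighbourhood are equal)
  have twinfreeV : ∀ v₁ v₂ : V, (∀ w, E v₁ w ↔ E v₂ w) → v₁ = v₂ := by
    intro v₁ v₂ hsame
    by_contra hvne
    set τ : Equiv.Perm (V ⊕ W) := Equiv.swap (Sum.inl v₁) (Sum.inl v₂) with hτ
    have key0 : ∀ (v : V) (w : W), (bipartiteGraph E).Adj (Sum.inl v) (Sum.inr w) →
        (bipartiteGraph E).Adj (τ (Sum.inl v)) (τ (Sum.inr w)) := by
      intro v w hxy
      rw [hτ, Equiv.swap_apply_of_ne_of_ne (x := Sum.inr w) (by simp) (by simp)]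
      rw [bp_adj_inl_inr] at hxy
      rcases eq_or_ne v v₁ with rfl | h1
      · rw [Equiv.swap_apply_left, bp_adj_inl_inr]
        exact (hsame w).mp hxy
      rcases eq_or_ne v v₂ with rfl | h2
      · rw [Equiv.swap_apply_right, bp_adj_inl_inr]
        exact (hsame w).mpr hxy
      · rw [Equiv.swap_apply_of_ne_of_ne (by simpa using h1) (by simpa using h2),
          bp_adj_inl_inr]
        exact hxy
    have key : ∀ x y, (bipartiteGraph E).Adj x y →
        (bipartiteGraph E).Adj (τ x) (τ y) := by
      intro x y hxy
      rcases x with v | w <;> rcases y with v' | w'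
      · exact absurd hxy (bp_adj_inl_inl E v v')
      · exact key0 v w' hxy
      · exact (key0 v' w hxy.symm).symm
      · exact absurd hxy (bp_adj_inr_inr E w w')
    have hswap : τ = 1 := by
      apply hrigid
      intro x y
      constructor
      · intro hxy
        have := key _ _ hxy
        simpa [hτ, Equiv.swap_apply_self] using this
      · exact key x y
    rw [hτ] at hswap
    exact hvne (Sum.inl_injective (Equiv.swap_eq_one_iff.mp hswap))
  -- neighborhood finsets
  set N : (_ ⊕ (W × Bool)) → Finset _ :=
    fun x => Finset.univ.filter (fun u => (multipede nb).Adj x u) with hN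
  have himg : ∀ x, N (σ x) = (N x).image σ := by
    intro x
    ext u
    simp only [hN, Finset.mem_filter, Finset.mem_univ, true_and, Finset.mem_image]
    constructor
    · intro hadj
      refine ⟨σ.symm u, ?_, σ.apply_symm_apply u⟩
      rw [← h x (σ.symm u)]
      rwa [σ.apply_symm_apply]
    · rintro ⟨u₀, hu₀, rfl⟩
      exact (h x u₀).mpr hu₀
  have hdeg : ∀ x, (N (σ x)).card = (N x).card := by
    intro x; rw [himg, Finset.card_image_of_injective _ σ.injective]
  -- inner vertices have odd degree 3
  have hdeg_inner : ∀ (v : V) (i : MPEVec), (N (Sum.inl (v, i))).card = 3 := by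
    intro v i
    have : N (Sum.inl (v, i)) =
        Finset.univ.image (fun j : Fin 3 => Sum.inr (nb v j, i.val j)) := by
      ext u
      simp only [hN, Finset.mem_filter, Finset.mem_univ, true_and, Finset.mem_image]
      rcases u with p | ⟨w, b⟩
      · rw [iff_false_intro (mp_adj_inl_inl nb (v, i) p), false_iff]
        rintro ⟨j, hj⟩
        exact absurd hj (by simp)
      · rw [mp_adj_inl_inr]
        constructor
        · rintro ⟨j, rfl, rfl⟩; exact ⟨j, rfl⟩
        · rintro ⟨j, hj⟩
          simp only [Sum.inr.injEq, Prod.mk.injEq] at hj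
          exact ⟨j, hj.1, hj.2⟩
    rw [this, Finset.card_image_of_injective, Finset.card_univ, Fintype.card_fin]
    intro j j' hjj
    injection hjj with hjj'
    injection hjj' with h1 h2
    exact hnb v h1
  -- outer vertices have even degree
  have hdeg_outer : ∀ (w : W) (b : Bool), Even (N (Sum.inr (w, b))).card := by
    intro w b
    set F : (V × MPEVec) ⊕ (W × Bool) → (V × MPEVec) ⊕ (W × Bool) := fun u =>
      match u with
      | Sum.inl (v, i) =>
        if hvw : ∃ j, nb v j = w then
          Sum.inl (v, ⟨mpflip hvw.choose i.val, mpflip_even _ _ i.property⟩)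
        else u
      | Sum.inr q => u
      with hF
    have hmemN : ∀ (v : V) (i : MPEVec), Sum.inl (v, i) ∈ N (Sum.inr (w, b)) ↔
        ∃ j, nb v j = w ∧ i.val j = b := by
      intro v i
      simp only [hN, Finset.mem_filter, Finset.mem_univ, true_and]
      exact mp_adj_inr_inl nb v i w b
    apply even_card_of_invol F
    · -- F maps N into N
      intro a ha
      rcases a with ⟨v, i⟩ | q
      · obtain ⟨j, hj, hij⟩ := (hmemN v i).mp ha
        have hvw : ∃ j, nb v j = w := ⟨j, hj⟩
        have hch : hvw.choose = j := hnb v (hvw.choose_spec.trans hj.symm)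
        rw [hF]
        simp only [dif_pos hvw]
        rw [hmemN]
        refine ⟨j, hj, ?_⟩
        show mpflip hvw.choose i.val j = b
        rw [hch, mpflip_apply, hij]
      · exact absurd (Finset.mem_filter.mp ha).2 (mp_adj_inr_inr nb (w, b) q)
    · -- F is an involution on N
      intro a ha
      rcases a with ⟨v, i⟩ | q
      · obtain ⟨j, hj, hij⟩ := (hmemN v i).mp ha
        have hvw : ∃ j, nb v j = w := ⟨j, hj⟩
        rw [hF]
        simp only [dif_pos hvw]
        congr 1
        exact Prod.ext rfl (Subtype.ext (mpflip_invol _ _))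
      · rw [hF]
    · -- F has no fixed points on N
      intro a ha
      rcases a with ⟨v, i⟩ | q
      · obtain ⟨j, hj, hij⟩ := (hmemN v i).mp ha
        have hvw : ∃ j, nb v j = w := ⟨j, hj⟩
        rw [hF]
        simp only [dif_pos hvw]
        intro hcon
        injection hcon with hcon'
        have : mpflip hvw.choose i.val = i.val := congrArg Subtype.val (congrArg Prod.snd hcon')
        exact mpflip_ne _ _ this
      · exact absurd (Finset.mem_filter.mp ha).2 (mp_adj_inr_inr nb (w, b) q)
  -- σ maps outer vertices to outer vertices and inner to inner
  have houter : ∀ (w : W) (b : Bool), ∃ w' b', σ (Sum.inr (w, b)) = Sum.inr (w', b') := by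
    intro w b
    rcases hσ : σ (Sum.inr (w, b)) with ⟨v, i⟩ | ⟨w', b'⟩
    · exfalso
      have := hdeg (Sum.inr (w, b))
      rw [hσ, hdeg_inner] at this
      have heven := hdeg_outer w b
      rw [← this] at heven
      exact (by decide : ¬ Even 3) heven
    · exact ⟨w', b', rfl⟩
  have hinner : ∀ (v : V) (i : MPEVec), ∃ v' i', σ (Sum.inl (v, i)) = Sum.inl (v', i') := by
    intro v i
    rcases hσ : σ (Sum.inl (v, i)) with ⟨v', i'⟩ | ⟨w', b'⟩
    · exact ⟨v', i', rfl⟩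
    · exfalso
      have := hdeg (Sum.inl (v, i))
      rw [hσ, hdeg_inner] at this
      have heven := hdeg_outer w' b'
      rw [this] at heven
      exact (by decide : ¬ Even 3) heven
  choose π' β' hπ using houter
  choose ρ' ι' hρ using hinner
  -- second neighborhoods in the multipede
  set Sg : W → Set W := fun w =>
    {w₂ | w₂ ≠ w ∧ ∃ v, (∃ j, nb v j = w) ∧ (∃ j, nb v j = w₂)} with hSg
  have hN2 : ∀ (w : W) (b : Bool), secondNbhd (multipede nb) (Sum.inr (w, b)) =
      {u | ∃ w₂ ∈ Sg w, ∃ c : Bool, u = Sum.inr (w₂, c)} := by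
    intro w b
    ext u
    constructor
    · rintro ⟨hne, y, hy1, hy2⟩
      rcases y with ⟨v, i⟩ | q
      · rw [mp_adj_inr_inl] at hy1
        obtain ⟨j, hj, hij⟩ := hy1
        rcases u with p | ⟨w₂, c⟩
        · exact absurd hy2 (mp_adj_inl_inl nb _ _)
        · rw [mp_adj_inl_inr] at hy2
          obtain ⟨j', hj', hij'⟩ := hy2
          have hw2 : w₂ ≠ w := by
            rintro rfl
            have hjj : j' = j := hnb v (hj'.trans hj.symm)
            subst hjj
            exact hne (by rw [hij'.symm.trans hij])
          exact ⟨w₂, ⟨hw2, v, ⟨j, hj⟩, ⟨j', hj'⟩⟩, c, rfl⟩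
      · exact absurd hy1 (mp_adj_inr_inr nb _ _)
    · rintro ⟨w₂, ⟨hw2, v, ⟨j, hj⟩, ⟨j', hj'⟩⟩, c, rfl⟩
      have hjj' : j ≠ j' := by rintro rfl; exact hw2 ((hj.symm.trans hj').symm)
      obtain ⟨i, hie, hib, hic⟩ := mp_exists_even_vec j j' hjj' b c
      refine ⟨by simp [hw2], Sum.inl (v, ⟨i, hie⟩), ?_, ?_⟩
      · rw [mp_adj_inr_inl]; exact ⟨j, hj, hib⟩
      · rw [mp_adj_inl_inr]; exact ⟨j', hj', hic⟩
  have hN2σ : ∀ x, secondNbhd (multipede nb) (σ x) = σ '' secondNbhd (multipede nb) x := by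
    intro x
    ext u
    constructor
    · rintro ⟨hne, y, hy1, hy2⟩
      refine ⟨σ.symm u, ⟨?_, σ.symm y, ?_, ?_⟩, σ.apply_symm_apply u⟩
      · intro hcon; apply hne; rw [← hcon, σ.apply_symm_apply]
      · exact (h x (σ.symm y)).mp (by rwa [σ.apply_symm_apply])
      · exact (h (σ.symm y) (σ.symm u)).mp (by rwa [σ.apply_symm_apply, σ.apply_symm_apply])
    · rintro ⟨u₀, ⟨hne, y₀, hy1, hy2⟩, rfl⟩
      exact ⟨fun hcon => hne (σ.injective hcon), σ y₀, (h x y₀).mpr hy1, (h y₀ u₀).mpr hy2⟩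
  -- second neighborhoods in the bipartite graph
  have hbN2 : ∀ w : W, secondNbhd (bipartiteGraph E) (Sum.inr w) =
      {u | ∃ w₂ ∈ Sg w, u = Sum.inr w₂} := by
    intro w
    ext u
    constructor
    · rintro ⟨hne, y, hy1, hy2⟩
      rcases y with v | q
      · have h1 : E v w := (bp_adj_inl_inr E v w).mp hy1.symm
        rcases u with p | w₂
        · exact absurd hy2 (bp_adj_inl_inl E v p)
        · have h2 : E v w₂ := (bp_adj_inl_inr E v w₂).mp hy2
          have hw2 : w₂ ≠ w := fun hcon => hne (by rw [hcon])
          exact ⟨w₂, ⟨hw2, v, (hnbE v w).mp h1, (hnbE v w₂).mp h2⟩, rfl⟩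
      · exact absurd hy1 (bp_adj_inr_inr E w q)
    · rintro ⟨w₂, ⟨hw2, v, hvw, hvw2⟩, rfl⟩
      refine ⟨by simp [hw2], Sum.inl v, ?_, ?_⟩
      · exact ((bp_adj_inl_inr E v w).mpr ((hnbE v w).mpr hvw)).symm
      · exact (bp_adj_inl_inr E v w₂).mpr ((hnbE v w₂).mpr hvw2)
  -- σ preserves the pairs
  have hpair : ∀ w : W, π' w false = π' w true := by
    intro w
    have e1 := hN2σ (Sum.inr (w, false))
    have e2 := hN2σ (Sum.inr (w, true))
    rw [hπ w false, hN2] at e1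
    rw [hπ w true, hN2] at e2
    have hsame : secondNbhd (multipede nb) (Sum.inr (w, false)) =
        secondNbhd (multipede nb) (Sum.inr (w, true)) := by rw [hN2, hN2]
    have key : {u : (V × MPEVec) ⊕ (W × Bool) | ∃ w₂ ∈ Sg (π' w false),
          ∃ c : Bool, u = Sum.inr (w₂, c)} =
        {u : (V × MPEVec) ⊕ (W × Bool) | ∃ w₂ ∈ Sg (π' w true),
          ∃ c : Bool, u = Sum.inr (w₂, c)} := by
      rw [e1, e2, hsame]
    have eSg : Sg (π' w false) = Sg (π' w true) := by
      ext w₂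
      constructor
      · intro hw
        have hm : (Sum.inr (w₂, false) : (V × MPEVec) ⊕ (W × Bool)) ∈
            {u | ∃ w₂ ∈ Sg (π' w false), ∃ c : Bool, u = Sum.inr (w₂, c)} :=
          ⟨w₂, hw, false, rfl⟩
        rw [key] at hm
        obtain ⟨w₃, hw₃, c, hc⟩ := hm
        simp only [Sum.inr.injEq, Prod.mk.injEq] at hc
        rw [hc.1]; exact hw₃
      · intro hw
        have hm : (Sum.inr (w₂, false) : (V × MPEVec) ⊕ (W × Bool)) ∈
            {u | ∃ w₂ ∈ Sg (π' w true), ∃ c : Bool, u = Sum.inr (w₂, c)} :=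
          ⟨w₂, hw, false, rfl⟩
        rw [← key] at hm
        obtain ⟨w₃, hw₃, c, hc⟩ := hm
        simp only [Sum.inr.injEq, Prod.mk.injEq] at hc
        rw [hc.1]; exact hw₃
    apply htwin
    rw [hbN2, hbN2, eSg]
  have hπ'c : ∀ w c, π' w c = π' w false := by
    intro w c; cases c
    · rfl
    · exact (hpair w).symm
  have hβne : ∀ w, β' w false ≠ β' w true := by
    intro w hcon
    have heq : σ (Sum.inr (w, false)) = σ (Sum.inr (w, true)) := by
      rw [hπ w false, hπ w true, hπ'c w true, hcon]
    have := σ.injective heq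
    simp at this
  -- the induced map on W is injective
  have hπinj : Function.Injective (fun w => π' w false) := by
    intro w₁ w₂ hww
    simp only at hww
    have h1 : σ (Sum.inr (w₁, false)) = Sum.inr (π' w₁ false, β' w₁ false) := hπ w₁ false
    have h2 : σ (Sum.inr (w₁, true)) = Sum.inr (π' w₁ false, β' w₁ true) := by
      rw [hπ w₁ true, hpair w₁]
    have h3 : σ (Sum.inr (w₂, false)) = Sum.inr (π' w₁ false, β' w₂ false) := by
      rw [hπ w₂ false, hww]
    have hcase : β' w₂ false = β' w₁ false ∨ β' w₂ false = β' w₁ true :=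
      mp_bool_trichotomy _ _ _ (hβne w₁)
    rcases hcase with heq | heq
    · have hss : σ (Sum.inr (w₂, false)) = σ (Sum.inr (w₁, false)) := by
        rw [h1, h3, heq]
      have := σ.injective hss
      simp only [Sum.inr.injEq, Prod.mk.injEq] at this
      exact this.1.symm
    · have hss : σ (Sum.inr (w₂, false)) = σ (Sum.inr (w₁, true)) := by
        rw [h2, h3, heq]
      have := σ.injective hss
      simp only [Sum.inr.injEq, Prod.mk.injEq] at this
      exact absurd this.2 (by simp)
  -- the induced neighbourhood correspondence for inner vertices
  have hρN : ∀ (v : V) (i : MPEVec) (w' : W),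
      (∃ j, nb (ρ' v i) j = w') ↔ (∃ j, π' (nb v j) false = w') := by
    intro v i w'
    constructor
    · rintro ⟨j, hj⟩
      have hadj : (multipede nb).Adj (σ (Sum.inl (v, i))) (Sum.inr (w', (ι' v i).val j)) := by
        rw [hρ v i, mp_adj_inl_inr]
        exact ⟨j, hj, rfl⟩
      have hadj' : (multipede nb).Adj (Sum.inl (v, i))
          (σ.symm (Sum.inr (w', (ι' v i).val j))) := by
        rw [← h]; rwa [σ.apply_symm_apply]
      rcases hsy : σ.symm (Sum.inr (w', (ι' v i).val j)) with p | ⟨w₂, c₂⟩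
      · rw [hsy] at hadj'; exact absurd hadj' (mp_adj_inl_inl nb _ _)
      · rw [hsy, mp_adj_inl_inr] at hadj'
        obtain ⟨j₂, hj₂, _⟩ := hadj'
        have hback : σ (Sum.inr (w₂, c₂)) = Sum.inr (w', (ι' v i).val j) := by
          rw [← hsy, σ.apply_symm_apply]
        rw [hπ w₂ c₂] at hback
        simp only [Sum.inr.injEq, Prod.mk.injEq] at hback
        exact ⟨j₂, by rw [hj₂, ← hπ'c w₂ c₂, hback.1]⟩
    · rintro ⟨j, hj⟩
      have hadj : (multipede nb).Adj (Sum.inl (v, i)) (Sum.inr (nb v j, i.val j)) :=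
        (mp_adj_inl_inr nb v i _ _).mpr ⟨j, rfl, rfl⟩
      have hadj2 := (h _ _).mpr hadj
      rw [hρ v i, hπ (nb v j) (i.val j), mp_adj_inl_inr] at hadj2
      obtain ⟨j₂, hj₂, _⟩ := hadj2
      exact ⟨j₂, by rw [hj₂, hπ'c, hj]⟩
  -- the induced map on `V ⊕ W` is an automorphism of `G`, hence the identity
  have i₀ : MPEVec := ⟨fun _ => false, by decide⟩
  have hρinj : Function.Injective (fun v => ρ' v i₀) := by
    have haux : ∀ v₁ v₂ : V, ρ' v₁ i₀ = ρ' v₂ i₀ → ∀ w, (∃ j, nb v₁ j = w) →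
        ∃ j, nb v₂ j = w := by
      intro v₁ v₂ hvv w hw
      obtain ⟨j, hj⟩ := hw
      have h1 : ∃ j, π' (nb v₁ j) false = π' w false := ⟨j, by rw [hj]⟩
      rw [← hρN v₁ i₀, hvv, hρN v₂ i₀] at h1
      obtain ⟨j₂, hj₂⟩ := h1
      exact ⟨j₂, hπinj hj₂⟩
    intro v₁ v₂ hvv
    simp only at hvv
    apply twinfreeV
    intro w
    rw [hnbE, hnbE]
    exact ⟨haux v₁ v₂ hvv w, haux v₂ v₁ hvv.symm w⟩
  have hfbij : Function.Bijective (Sum.map (fun v => ρ' v i₀) (fun w => π' w false)) :=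
    Finite.injective_iff_bijective.mp (hρinj.sumMap hπinj)
  have hEiff : ∀ v w, E (ρ' v i₀) (π' w false) ↔ E v w := by
    intro v w
    rw [hnbE, hnbE, hρN]
    constructor
    · rintro ⟨j, hj⟩; exact ⟨j, hπinj hj⟩
    · rintro ⟨j, hj⟩; exact ⟨j, by rw [hj]⟩
  have hσGone : Equiv.ofBijective _ hfbij = 1 := by
    apply hrigid
    intro x y
    rcases x with v | w <;> rcases y with v' | w'
    · simp only [Equiv.ofBijective_apply, Sum.map_inl]
      exact iff_of_false (bp_adj_inl_inl E _ _) (bp_adj_inl_inl E _ _)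
    · simp only [Equiv.ofBijective_apply, Sum.map_inl, Sum.map_inr]
      rw [bp_adj_inl_inr, bp_adj_inl_inr]
      exact hEiff v w'
    · simp only [Equiv.ofBijective_apply, Sum.map_inl, Sum.map_inr]
      rw [SimpleGraph.adj_comm, bp_adj_inl_inr, SimpleGraph.adj_comm, bp_adj_inl_inr]
      exact hEiff v' w
    · simp only [Equiv.ofBijective_apply, Sum.map_inr]
      exact iff_of_false (bp_adj_inr_inr E _ _) (bp_adj_inr_inr E _ _)
  have hπid : ∀ w, π' w false = w := by
    intro w
    have h1 : (Equiv.ofBijective _ hfbij) (Sum.inr w) = (Sum.inr w : V ⊕ W) := by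
      rw [hσGone]; rfl
    rw [Equiv.ofBijective_apply, Sum.map_inr] at h1
    exact Sum.inr_injective h1
  have hρ'id : ∀ (v : V) (i : MPEVec), ρ' v i = v := by
    intro v i
    apply twinfreeV
    intro w
    rw [hnbE, hnbE, hρN v i w]
    constructor
    · rintro ⟨j, hj⟩; exact ⟨j, by rw [← hπid (nb v j), hj]⟩
    · rintro ⟨j, hj⟩; exact ⟨j, by rw [hπid (nb v j), hj]⟩
  -- the coordinatewise action of σ on inner vertices
  have hcoord : ∀ (v : V) (i : MPEVec) (j : Fin 3),
      (ι' v i).val j = β' (nb v j) (i.val j) := by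
    intro v i j
    have hadj : (multipede nb).Adj (Sum.inl (v, i)) (Sum.inr (nb v j, i.val j)) :=
      (mp_adj_inl_inr nb v i _ _).mpr ⟨j, rfl, rfl⟩
    have hadj2 := (h _ _).mpr hadj
    rw [hρ v i, hπ (nb v j) (i.val j), mp_adj_inl_inr] at hadj2
    obtain ⟨j₂, hj₂, hb⟩ := hadj2
    rw [hρ'id v i, hπ'c (nb v j) (i.val j), hπid (nb v j)] at hj₂
    have hjj : j₂ = j := hnb v hj₂
    rwa [hjj] at hb
  -- the swap mask and its parity
  have hβ : ∀ w c, β' w c = xor c (β' w false) := by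
    intro w c
    cases c
    · simp
    · have hne := hβne w
      cases hb : β' w false <;> cases hb2 : β' w true
      · rw [hb, hb2] at hne; exact absurd rfl hne
      · rfl
      · rfl
      · rw [hb, hb2] at hne; exact absurd rfl hne
  have hevenmask : ∀ v : V, Even (mpwt (fun j => β' (nb v j) false)) := by
    intro v
    have hfun : (ι' v i₀).val = fun j => xor (i₀.val j) (β' (nb v j) false) := by
      funext j
      rw [hcoord v i₀ j, hβ]
    have he1 : Even (mpwt (ι' v i₀).val) := (ι' v i₀).property
    rw [hfun] at he1
    exact (mp_xor_parity i₀.val _ i₀.property).mp he1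
  -- the mask is trivial
  have hX : ∀ w, β' w false = false := by
    by_contra hcon
    push_neg at hcon
    obtain ⟨w₀, hw₀⟩ := hcon
    have hXne : (Finset.univ.filter (fun w => β' w false = true)).Nonempty :=
      ⟨w₀, Finset.mem_filter.mpr ⟨Finset.mem_univ _, Bool.ne_false_iff.mp hw₀⟩⟩
    obtain ⟨v, hv⟩ := hodd _ hXne
    have himg2 : (Finset.univ.filter (fun w => β' w false = true)).filter (fun w => E v w) =
        (Finset.univ.filter (fun j : Fin 3 => β' (nb v j) false = true)).image (nb v) := by
      ext w
      simp only [Finset.mem_filter, Finset.mem_univ, true_and, Finset.mem_image]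
      constructor
      · rintro ⟨hw, hE⟩
        obtain ⟨j, rfl⟩ := (hnbE v w).mp hE
        exact ⟨j, hw, rfl⟩
      · rintro ⟨j, hj, rfl⟩
        exact ⟨hj, (hnbE v _).mpr ⟨j, rfl⟩⟩
    rw [himg2, Finset.card_image_of_injective _ (hnb v)] at hv
    exact (Nat.not_odd_iff_even.mpr (hevenmask v)) hv
  -- conclusion: σ is the identity
  apply Equiv.ext
  intro z
  show σ z = z
  rcases z with ⟨v, i⟩ | ⟨w, c⟩
  · rw [hρ v i, hρ'id v i]
    have hii : ι' v i = i := by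
      apply Subtype.ext
      funext j
      rw [hcoord v i j, hβ, hX, Bool.xor_false]
    rw [hii]
  · rw [hπ w c, hπ'c w c, hπid w, hβ, hX, Bool.xor_false]
end
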